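/- arXiv:2009.10622 — 4 statements merged into one kernel-verified Lean document; each statement's English description precedes it below -/
import Mathlib

section
/- (Differential entropy bound for the SGaME model). Let s_0 = s_{ψ_0} with ψ_0 ∈ Ψ̃. Set C_{s_0} = (4π)^{-q/2}·A_Σ^{q/2} and H_{s_0} = max{0, ln C_{s_0}}. Then max{0, sup_{x∈[0,1]^p} ∫_{ℝ^q} ln(s_0(y|x))·s_0(y|x) dy} ≤ H_{s_0} < ∞; in particular, for every x ∈ [0,1]^p, ∫_{ℝ^q} ln(s_0(y|x))·s_0(y|x) dy ≤ ln C_{s_0}. -/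
open MeasureTheory Real Finset ProbabilityTheory

noncomputable section

/-- Multivariate Gaussian density on `ℝ^q` with mean `mu` and covariance `S`. -/
def gaussPdf (q : ℕ) (mu : Fin q → ℝ) (S : Matrix (Fin q) (Fin q) ℝ) (y : Fin q → ℝ) : ℝ :=
  (2 * π) ^ (-(q : ℝ) / 2) * S.det ^ (-(1 : ℝ) / 2) *
    Real.exp (-(dotProduct (y - mu) (S⁻¹.mulVec (y - mu))) / 2)

/-- Parameters of a `K`-component softmax-gated mixture of Gaussian experts. -/
structure SGaMEParam (K p q : ℕ) where
  g0 : Fin K → ℝ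
  g : Fin K → Fin p → ℝ
  b0 : Fin K → Fin q → ℝ
  b : Fin K → Matrix (Fin q) (Fin p) ℝ
  cov : Fin K → Matrix (Fin q) (Fin q) ℝ

namespace SGaMEParam
variable {K p q : ℕ}

/-- Gating logit `w_k(x) = γ_{k0} + γ_kᵀ x`. -/
def logit (ψ : SGaMEParam K p q) (k : Fin K) (x : Fin p → ℝ) : ℝ :=
  ψ.g0 k + ∑ j, ψ.g k j * x j

/-- Softmax gating function `g_k(x;γ)`. -/
def gate (ψ : SGaMEParam K p q) (k : Fin K) (x : Fin p → ℝ) : ℝ :=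
  Real.exp (ψ.logit k x) / ∑ l, Real.exp (ψ.logit l x)

/-- Mean of the `k`-th Gaussian expert. -/
def mean (ψ : SGaMEParam K p q) (k : Fin K) (x : Fin p → ℝ) : Fin q → ℝ :=
  fun z => ψ.b0 k z + ((ψ.b k).mulVec x) z

/-- The SGaME conditional density `s_ψ(y|x)`. -/
def density (ψ : SGaMEParam K p q) (x : Fin p → ℝ) (y : Fin q → ℝ) : ℝ :=
  ∑ k, ψ.gate k x * gaussPdf q (ψ.mean k x) (ψ.cov k) y

/-- `‖ψ^{[1,2]}‖₁`, the ℓ1-norm of the gating and expert regression coefficients. -/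
def norm12 (ψ : SGaMEParam K p q) : ℝ :=
  (∑ k, ∑ j, |ψ.g k j|) + (∑ k, ∑ j, ∑ z, |ψ.b k z j|)

end SGaMEParam

/-- The unit cube `[0,1]^p`. -/
def cube (p : ℕ) : Set (Fin p → ℝ) := Set.Icc 0 1

/-- The bounded parameter class `Ψ̃`. -/
def InPsiT {K p q : ℕ} (Agam Abeta aSig ASig : ℝ) (ψ : SGaMEParam K p q) : Prop :=
  (∀ k, (ψ.cov k).IsSymm ∧ (ψ.cov k).PosDef) ∧
  (∀ k, ∀ x ∈ cube p, |ψ.g0 k| + |∑ j, ψ.g k j * x j| ≤ Agam) ∧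
  (∀ k, ∀ x ∈ cube p, ∀ z, |ψ.b0 k z| + |((ψ.b k).mulVec x) z| ≤ Abeta) ∧
  (∀ k, ∀ μ ∈ spectrum ℝ ((ψ.cov k)⁻¹), aSig ≤ μ ∧ μ ≤ ASig)

/-- Average conditional Kullback–Leibler divergence for fixed covariates. -/
def KLn {p q : ℕ} (n : ℕ) (x : Fin n → Fin p → ℝ)
    (s t : (Fin p → ℝ) → (Fin q → ℝ) → ℝ) : ℝ :=
  (1 / n : ℝ) * ∑ i, ∫ y : Fin q → ℝ, Real.log (s (x i) y / t (x i) y) * s (x i) y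

/-- Upper bound `A_G` on the softmax gating functions. -/
def AGbd (K : ℕ) (Agam : ℝ) : ℝ := Real.exp Agam / (K * Real.exp (-Agam))

/-- `H_{s_0}`. -/
def Hs0 (q : ℕ) (ASig : ℝ) : ℝ :=
  max 0 (Real.log ((4 * π) ^ (-(q : ℝ) / 2) * ASig ^ ((q : ℝ) / 2)))

end


noncomputable section AuxProofs
open Matrix

namespace SGaMEAux

lemma oneD : ∫ x : ℝ, Real.exp (-x^2/2) = Real.sqrt (2*π) := by
  have h := integral_gaussian (1/2 : ℝ)
  have e : (fun x:ℝ => Real.exp (-x^2/2)) = fun x:ℝ => Real.exp (-(1/2)*x^2) := by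
    funext x; ring_nf
  rw [e, h, div_div_eq_mul_div, div_one, mul_comm]

lemma oneDint : Integrable (fun x : ℝ => Real.exp (-x^2/2)) := by
  have e : (fun x:ℝ => Real.exp (-x^2/2)) = fun x:ℝ => Real.exp (-(1/2)*x^2) := by
    funext x; ring_nf
  rw [e]
  exact integrable_exp_neg_mul_sq (by norm_num)

lemma dotsq (q : ℕ) (z : Fin q → ℝ) : Real.exp (-(z ⬝ᵥ z)/2) = ∏ i, Real.exp (-(z i)^2/2) := by
  rw [← Real.exp_sum]
  congr 1
  simp [dotProduct, pow_two, Finset.sum_div, neg_div]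

lemma stdint (q : ℕ) : Integrable (fun z : Fin q → ℝ => Real.exp (-(z ⬝ᵥ z)/2)) := by
  simp_rw [dotsq]
  exact Integrable.fintype_prod (fun i => oneDint)

lemma stdgauss (q : ℕ) : ∫ z : Fin q → ℝ, Real.exp (-(z ⬝ᵥ z)/2) = (2*π)^((q:ℝ)/2) := by
  simp_rw [dotsq]
  rw [volume_pi, integral_fintype_prod_eq_pow (ι := Fin q) (fun x : ℝ => Real.exp (-x^2/2)), oneD]
  rw [Fintype.card_fin, show √(2*π) = (2*π)^((1:ℝ)/2) from Real.sqrt_eq_rpow _,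
    ← Real.rpow_natCast ((2*π)^((1:ℝ)/2)) q, ← Real.rpow_mul (by positivity)]
  congr 1; ring

lemma psd_det_nonneg {q : ℕ} {B : Matrix (Fin q) (Fin q) ℝ} (hB : B.PosSemidef) :
    0 ≤ B.det := by
  rw [hB.1.det_eq_prod_eigenvalues]
  exact Finset.prod_nonneg (fun i _ => hB.eigenvalues_nonneg i)

lemma gauss_quad (q : ℕ) (A : Matrix (Fin q) (Fin q) ℝ) (hA : A.PosDef) :
    Integrable (fun y : Fin q → ℝ => Real.exp (-(y ⬝ᵥ A *ᵥ y)/2)) ∧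
    ∫ y : Fin q → ℝ, Real.exp (-(y ⬝ᵥ A *ᵥ y)/2) = (2*π)^((q:ℝ)/2) * A.det ^ (-(1:ℝ)/2) := by
  classical
  obtain ⟨B, hB, hBB⟩ : ∃ B : Matrix (Fin q) (Fin q) ℝ, B.PosSemidef ∧ B * B = A :=
    by open scoped MatrixOrder in exact ⟨CFC.sqrt A, (CFC.sqrt_nonneg A).posSemidef, CFC.sqrt_mul_sqrt_self A hA.posSemidef.nonneg⟩
  have hBsymm : Bᵀ = B := hB.1
  have hdetB2 : B.det * B.det = A.det := by rw [← Matrix.det_mul, hBB]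
  have hdetBnn : 0 ≤ B.det := psd_det_nonneg hB
  have hdetA : 0 < A.det := hA.det_pos
  have hdetB : B.det = Real.sqrt A.det := by
    rw [← hdetB2, Real.sqrt_mul_self hdetBnn]
  have hdetBpos : 0 < B.det := by rw [hdetB]; exact Real.sqrt_pos.mpr hdetA
  have hkey : ∀ y : Fin q → ℝ, (Matrix.toLin' B y) ⬝ᵥ (Matrix.toLin' B y) = y ⬝ᵥ A *ᵥ y := by
    intro y
    rw [Matrix.toLin'_apply, Matrix.dotProduct_mulVec]
    have h2 := Matrix.vecMul_transpose B (B *ᵥ y)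
    rw [hBsymm] at h2
    rw [h2, Matrix.mulVec_mulVec, hBB, dotProduct_comm]
  have hmap : Measure.map (Matrix.toLin' B) volume
      = ENNReal.ofReal (|B.det|⁻¹) • volume := by
    rw [← abs_inv]
    exact Real.map_matrix_volume_pi_eq_smul_volume_pi hdetBpos.ne'
  have hmeas : Measurable (Matrix.toLin' B) :=
    (Matrix.toLin' B).continuous_of_finiteDimensional.measurable
  have hfc : Continuous (fun z : Fin q → ℝ => Real.exp (-(z ⬝ᵥ z)/2)) := by
    have hd : ∀ z : Fin q → ℝ, z ⬝ᵥ z = ∑ i, z i * z i := fun z => rfl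
    simp_rw [hd]
    fun_prop
  have hint : Integrable (fun y : Fin q → ℝ => Real.exp (-(y ⬝ᵥ A *ᵥ y)/2)) := by
    have h3 : Integrable ((fun z : Fin q → ℝ => Real.exp (-(z ⬝ᵥ z)/2)) ∘ (Matrix.toLin' B)) := by
      rw [← integrable_map_measure hfc.aestronglyMeasurable hmeas.aemeasurable, hmap]
      exact (stdint q).smul_measure ENNReal.ofReal_ne_top
    refine h3.congr (Filter.Eventually.of_forall (fun y => ?_))
    simp only [Function.comp, hkey y]
  refine ⟨hint, ?_⟩
  have h1 : ∫ y : Fin q → ℝ, Real.exp (-(y ⬝ᵥ A *ᵥ y)/2)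
      = ∫ y : Fin q → ℝ, ((fun z : Fin q → ℝ => Real.exp (-(z ⬝ᵥ z)/2)) ∘ (Matrix.toLin' B)) y := by
    congr 1
    funext y
    simp only [Function.comp, hkey y]
  have h2 : ∫ y : Fin q → ℝ, ((fun z : Fin q → ℝ => Real.exp (-(z ⬝ᵥ z)/2)) ∘ (Matrix.toLin' B)) y
      = ∫ z : Fin q → ℝ, Real.exp (-(z ⬝ᵥ z)/2) ∂(Measure.map (Matrix.toLin' B) volume) :=
    (integral_map hmeas.aemeasurable hfc.aestronglyMeasurable).symm
  rw [h1, h2, hmap, integral_smul_measure, stdgauss]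
  rw [ENNReal.toReal_ofReal (by positivity), abs_of_pos hdetBpos, hdetB, smul_eq_mul]
  rw [Real.sqrt_eq_rpow, ← Real.rpow_neg hdetA.le, mul_comm]
  norm_num

lemma gauss_quad_shift (q : ℕ) (A : Matrix (Fin q) (Fin q) ℝ) (hA : A.PosDef) (m : Fin q → ℝ) :
    Integrable (fun y : Fin q → ℝ => Real.exp (-((y - m) ⬝ᵥ A *ᵥ (y - m))/2)) ∧
    ∫ y : Fin q → ℝ, Real.exp (-((y - m) ⬝ᵥ A *ᵥ (y - m))/2)
      = (2*π)^((q:ℝ)/2) * A.det ^ (-(1:ℝ)/2) := by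
  constructor
  · exact (gauss_quad q A hA).1.comp_sub_right m
  · rw [integral_sub_right_eq_self (μ := volume)
      (fun z : Fin q → ℝ => Real.exp (-(z ⬝ᵥ A *ᵥ z)/2)) m]
    exact (gauss_quad q A hA).2

lemma posDef_smul {q : ℕ} {S : Matrix (Fin q) (Fin q) ℝ} (hS : S.PosDef) {c : ℝ} (hc : 0 < c) :
    (c • S).PosDef := by
  exact hS.smul hc

lemma quad_smul {q : ℕ} (S : Matrix (Fin q) (Fin q) ℝ) (c : ℝ) (v : Fin q → ℝ) :
    v ⬝ᵥ (c • S) *ᵥ v = c * (v ⬝ᵥ S *ᵥ v) := by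
  rw [Matrix.smul_mulVec, dotProduct_smul, smul_eq_mul]

lemma sqrt_add_le' (a b : ℝ) (ha : 0 ≤ a) (hb : 0 ≤ b) :
    Real.sqrt (a + b) ≤ Real.sqrt a + Real.sqrt b := by
  have h : a + b ≤ (Real.sqrt a + Real.sqrt b)^2 := by
    rw [add_sq]
    nlinarith [Real.sq_sqrt ha, Real.sq_sqrt hb, Real.sqrt_nonneg a, Real.sqrt_nonneg b]
  calc Real.sqrt (a+b) ≤ Real.sqrt ((Real.sqrt a + Real.sqrt b)^2) := Real.sqrt_le_sqrt h
  _ = Real.sqrt a + Real.sqrt b := Real.sqrt_sq (by positivity)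

lemma sqrt_sum_le {ι : Type*} (s : Finset ι) (f : ι → ℝ) (hf : ∀ i, 0 ≤ f i) :
    Real.sqrt (∑ i ∈ s, f i) ≤ ∑ i ∈ s, Real.sqrt (f i) := by
  induction s using Finset.cons_induction with
  | empty => simp
  | cons a s ha ih =>
    rw [Finset.sum_cons, Finset.sum_cons]
    calc Real.sqrt (f a + ∑ i ∈ s, f i) ≤ Real.sqrt (f a) + Real.sqrt (∑ i ∈ s, f i) :=
        sqrt_add_le' _ _ (hf a) (Finset.sum_nonneg (fun i _ => hf i))
    _ ≤ _ := by linarith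

variable {q : ℕ} {S : Matrix (Fin q) (Fin q) ℝ} {mu : Fin q → ℝ}

lemma gaussPdf_eq (hS : S.PosDef) (y : Fin q → ℝ) :
    gaussPdf q mu S y = ((2 * π) ^ (-(q:ℝ) / 2) * S.det ^ (-(1:ℝ) / 2)) *
      Real.exp (-((y - mu) ⬝ᵥ S⁻¹ *ᵥ (y - mu)) / 2) := rfl

lemma det_inv_eq (hS : S.PosDef) : (S⁻¹).det = S.det⁻¹ := by
  rw [Matrix.det_nonsing_inv, Ring.inverse_eq_inv']

lemma gaussPdf_nonneg (hS : S.PosDef) (y : Fin q → ℝ) : 0 ≤ gaussPdf q mu S y := by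
  rw [gaussPdf_eq hS]
  have := hS.det_pos
  positivity

lemma quad_nonneg (hS : S.PosDef) (v : Fin q → ℝ) : 0 ≤ v ⬝ᵥ S⁻¹ *ᵥ v := by
  have h := hS.inv.posSemidef.dotProduct_mulVec_nonneg v
  rwa [star_trivial] at h

lemma gaussPdf_le (hS : S.PosDef) (y : Fin q → ℝ) :
    gaussPdf q mu S y ≤ (2 * π) ^ (-(q:ℝ) / 2) * S.det ^ (-(1:ℝ) / 2) := by
  rw [gaussPdf_eq hS]
  have h1 : Real.exp (-((y - mu) ⬝ᵥ S⁻¹ *ᵥ (y - mu)) / 2) ≤ 1 := by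
    rw [Real.exp_le_one_iff]
    have := quad_nonneg hS (y - mu)
    linarith
  have h2 : (0:ℝ) < (2 * π) ^ (-(q:ℝ) / 2) * S.det ^ (-(1:ℝ) / 2) := by
    have := hS.det_pos
    positivity
  nlinarith

lemma integrable_gaussPdf (hS : S.PosDef) : Integrable (gaussPdf q mu S) := by
  have h := (gauss_quad_shift q S⁻¹ hS.inv mu).1
  simpa only [← gaussPdf_eq hS] using h.const_mul ((2 * π) ^ (-(q:ℝ) / 2) * S.det ^ (-(1:ℝ) / 2))

lemma integral_gaussPdf (hS : S.PosDef) : ∫ y : Fin q → ℝ, gaussPdf q mu S y = 1 := by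
  have h := (gauss_quad_shift q S⁻¹ hS.inv mu).2
  have hd := hS.det_pos
  calc ∫ y : Fin q → ℝ, gaussPdf q mu S y
      = ((2 * π) ^ (-(q:ℝ) / 2) * S.det ^ (-(1:ℝ) / 2)) *
        ∫ y : Fin q → ℝ, Real.exp (-((y - mu) ⬝ᵥ S⁻¹ *ᵥ (y - mu)) / 2) := by
        rw [← integral_const_mul]; rfl
  _ = ((2 * π) ^ (-(q:ℝ) / 2) * S.det ^ (-(1:ℝ) / 2)) *
        ((2*π)^((q:ℝ)/2) * (S.det⁻¹) ^ (-(1:ℝ)/2)) := by rw [h, det_inv_eq hS]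
  _ = 1 := by
        have h2pi : (0:ℝ) < 2*π := by positivity
        have e1 : (2*π)^(-(q:ℝ)/2) * (2*π)^((q:ℝ)/2) = 1 := by
          rw [← Real.rpow_add h2pi, neg_div, neg_add_cancel, Real.rpow_zero]
        have e2 : S.det^(-(1:ℝ)/2) * (S.det⁻¹)^(-(1:ℝ)/2) = 1 := by
          rw [Real.inv_rpow hd.le, mul_inv_cancel₀ (Real.rpow_pos_of_pos hd _).ne']
        calc (2*π)^(-(q:ℝ)/2) * S.det^(-(1:ℝ)/2) * ((2*π)^((q:ℝ)/2) * (S.det⁻¹)^(-(1:ℝ)/2))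
            = ((2*π)^(-(q:ℝ)/2) * (2*π)^((q:ℝ)/2)) * (S.det^(-(1:ℝ)/2) * (S.det⁻¹)^(-(1:ℝ)/2)) := by
              ring
        _ = 1 := by rw [e1, e2, mul_one]

lemma sq_gaussPdf_eq (hS : S.PosDef) (y : Fin q → ℝ) :
    (gaussPdf q mu S y)^2 = ((2 * π) ^ (-(q:ℝ) / 2) * S.det ^ (-(1:ℝ) / 2))^2 *
      Real.exp (-((y - mu) ⬝ᵥ ((2:ℝ) • S⁻¹) *ᵥ (y - mu)) / 2) := by
  rw [gaussPdf_eq hS, mul_pow, pow_two (Real.exp _), ← Real.exp_add, quad_smul]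
  congr 1
  ring

lemma integrable_sq_gaussPdf (hS : S.PosDef) :
    Integrable (fun y => (gaussPdf q mu S y)^2) := by
  have h := ((gauss_quad_shift q ((2:ℝ) • S⁻¹) (posDef_smul hS.inv two_pos) mu).1.const_mul
    (((2 * π) ^ (-(q:ℝ) / 2) * S.det ^ (-(1:ℝ) / 2))^2))
  refine h.congr (Filter.Eventually.of_forall (fun y => ?_))
  exact (sq_gaussPdf_eq hS y).symm

lemma integral_sq_gaussPdf (hS : S.PosDef) :
    ∫ y : Fin q → ℝ, (gaussPdf q mu S y)^2
      = (4*π)^(-(q:ℝ)/2) * (S.det⁻¹)^((1:ℝ)/2) := by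
  have hd := hS.det_pos
  have h2pi : (0:ℝ) < 2*π := by positivity
  have hdet2 : ((2:ℝ) • S⁻¹).det = (2:ℝ)^(q:ℝ) * S.det⁻¹ := by
    rw [Matrix.det_smul, det_inv_eq hS, Fintype.card_fin, Real.rpow_natCast]
  have h := (gauss_quad_shift q ((2:ℝ) • S⁻¹) (posDef_smul hS.inv two_pos) mu).2
  have step : ∫ y : Fin q → ℝ, (gaussPdf q mu S y)^2
      = ((2 * π) ^ (-(q:ℝ) / 2) * S.det ^ (-(1:ℝ) / 2))^2 *
        ((2*π)^((q:ℝ)/2) * ((2:ℝ)^(q:ℝ) * S.det⁻¹) ^ (-(1:ℝ)/2)) := by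
    rw [← hdet2, ← h, ← integral_const_mul]
    congr 1
    funext y
    rw [sq_gaussPdf_eq hS]
  rw [step]
  have e3 : ((2:ℝ)^(q:ℝ) * S.det⁻¹)^(-(1:ℝ)/2)
      = (2:ℝ)^(-(q:ℝ)/2) * S.det^((1:ℝ)/2) := by
    rw [Real.mul_rpow (by positivity) (by positivity),
      ← Real.rpow_mul (by norm_num : (0:ℝ) ≤ 2),
      Real.inv_rpow hd.le, ← Real.rpow_neg hd.le,
      show (q:ℝ) * (-1/2) = -(q:ℝ)/2 by ring,
      show -(-(1:ℝ)/2) = (1:ℝ)/2 by norm_num]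
  rw [e3]
  have e4 : (2*π)^(-(q:ℝ)/2) * (2:ℝ)^(-(q:ℝ)/2) = (4*π)^(-(q:ℝ)/2) := by
    rw [← Real.mul_rpow (by positivity) (by norm_num)]
    norm_num
    ring_nf
  have e5 : S.det ^ (-(1:ℝ)/2) * S.det ^ (-(1:ℝ)/2) * S.det ^ ((1:ℝ)/2) = (S.det⁻¹)^((1:ℝ)/2) := by
    rw [← Real.rpow_add hd, ← Real.rpow_add hd, Real.inv_rpow hd.le, ← Real.rpow_neg hd.le]
    norm_num
  have e6 : (2*π)^(-(q:ℝ)/2) * (2*π)^((q:ℝ)/2) = 1 := by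
    rw [← Real.rpow_add h2pi, neg_div, neg_add_cancel, Real.rpow_zero]
  calc ((2 * π) ^ (-(q:ℝ) / 2) * S.det ^ (-(1:ℝ) / 2))^2 *
        ((2*π)^((q:ℝ)/2) * ((2:ℝ)^(-(q:ℝ)/2) * S.det^((1:ℝ)/2)))
      = ((2*π)^(-(q:ℝ)/2) * (2*π)^((q:ℝ)/2)) * ((2*π)^(-(q:ℝ)/2) * (2:ℝ)^(-(q:ℝ)/2)) *
        (S.det ^ (-(1:ℝ)/2) * S.det ^ (-(1:ℝ)/2) * S.det ^ ((1:ℝ)/2)) := by ring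
  _ = (4*π)^(-(q:ℝ)/2) * (S.det⁻¹)^((1:ℝ)/2) := by rw [e4, e5, e6, one_mul]

lemma sqrt_gaussPdf_eq (hS : S.PosDef) (y : Fin q → ℝ) :
    Real.sqrt (gaussPdf q mu S y)
      = Real.sqrt ((2 * π) ^ (-(q:ℝ) / 2) * S.det ^ (-(1:ℝ) / 2)) *
        Real.exp (-((y - mu) ⬝ᵥ (((1:ℝ)/2) • S⁻¹) *ᵥ (y - mu)) / 2) := by
  rw [gaussPdf_eq hS, Real.sqrt_mul (by have := hS.det_pos; positivity), quad_smul]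
  congr 1
  rw [Real.sqrt_eq_rpow, ← Real.exp_mul]
  congr 1
  ring

lemma integrable_sqrt_gaussPdf (hS : S.PosDef) :
    Integrable (fun y => Real.sqrt (gaussPdf q mu S y)) := by
  have h := ((gauss_quad_shift q (((1:ℝ)/2) • S⁻¹) (posDef_smul hS.inv (by norm_num)) mu).1.const_mul
    (Real.sqrt ((2 * π) ^ (-(q:ℝ) / 2) * S.det ^ (-(1:ℝ) / 2))))
  refine h.congr (Filter.Eventually.of_forall (fun y => ?_))
  exact (sqrt_gaussPdf_eq hS y).symm

lemma continuous_gaussPdf : Continuous (gaussPdf q mu S) := by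
  have hd : ∀ y : Fin q → ℝ, (y - mu) ⬝ᵥ S⁻¹ *ᵥ (y - mu)
      = ∑ i, (y i - mu i) * ∑ j, S⁻¹ i j * (y j - mu j) := fun y => rfl
  unfold gaussPdf
  simp_rw [dotProduct, Matrix.mulVec, dotProduct, Pi.sub_apply]
  fun_prop

lemma det_inv_le {ASig : ℝ} (hS : S.PosDef)
    (hspec : ∀ μ ∈ spectrum ℝ S⁻¹, μ ≤ ASig) : (S⁻¹).det ≤ ASig ^ q := by
  have hA : (S⁻¹).PosDef := hS.inv
  have hH : (S⁻¹).IsHermitian := hA.1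
  rw [hH.det_eq_prod_eigenvalues]
  calc ∏ i, hH.eigenvalues i ≤ ∏ i : Fin q, ASig := by
        refine Finset.prod_le_prod (fun i _ => hA.posSemidef.eigenvalues_nonneg i)
          (fun i _ => hspec _ (hH.eigenvalues_mem_spectrum_real i))
  _ = ASig ^ q := by rw [Finset.prod_const, Finset.card_univ, Fintype.card_fin]


lemma det_neg_half_le {q : ℕ} {S : Matrix (Fin q) (Fin q) ℝ} (hS : S.PosDef) {ASig : ℝ}
    (hA : 0 < ASig) (h : (S⁻¹).det ≤ ASig ^ q) :
    S.det ^ (-(1:ℝ)/2) ≤ ASig ^ ((q:ℝ)/2) := by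
  have hd := hS.det_pos
  have h' : S.det⁻¹ ≤ ASig ^ q := by rwa [← det_inv_eq hS]
  have e1 : S.det ^ (-(1:ℝ)/2) = (S.det⁻¹)^((1:ℝ)/2) := by
    rw [Real.inv_rpow hd.le, show (-(1:ℝ)/2) = -((1:ℝ)/2) by norm_num, Real.rpow_neg hd.le]
  rw [e1]
  calc (S.det⁻¹)^((1:ℝ)/2) ≤ ((ASig^q : ℝ))^((1:ℝ)/2) :=
      Real.rpow_le_rpow (by positivity) h' (by norm_num)
  _ = ASig ^ ((q:ℝ)/2) := by
      rw [← Real.rpow_natCast ASig q, ← Real.rpow_mul hA.le]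
      congr 1; ring

end SGaMEAux

end AuxProofs

/-- differential entropy bound for the SGaME model. -/
theorem sgame_differential_entropy_bound
    (K p q : ℕ) (hK : 1 ≤ K) (hp : 1 ≤ p) (hq : 1 ≤ q)
    (Agam Abeta aSig ASig : ℝ)
    (hAgam : 0 < Agam) (hAbeta : 0 < Abeta) (haSig : 0 < aSig) (hASig : 0 < ASig)
    (ψ0 : SGaMEParam K p q) (hψ0 : InPsiT Agam Abeta aSig ASig ψ0) :
    (∀ x ∈ cube p,
        ∫ y : Fin q → ℝ, Real.log (ψ0.density x y) * ψ0.density x y ≤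
          Real.log ((4 * π) ^ (-(q : ℝ) / 2) * ASig ^ ((q : ℝ) / 2))) ∧
      max 0 (⨆ x : cube p,
          ∫ y : Fin q → ℝ, Real.log (ψ0.density (x : Fin p → ℝ) y) * ψ0.density x y) ≤
        Hs0 q ASig := by
  classical
  open SGaMEAux Matrix in
  obtain ⟨hcov, hgam, hbeta, hspec⟩ := hψ0
  have h2pi : (0:ℝ) < 2*π := by positivity
  set C := (4*π)^(-(q:ℝ)/2) * ASig^((q:ℝ)/2) with hC
  have hCpos : 0 < C := by positivity
  have hSk : ∀ k, (ψ0.cov k).PosDef := fun k => (hcov k).2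
  have hdetk : ∀ k, ((ψ0.cov k)⁻¹).det ≤ ASig ^ q :=
    fun k => SGaMEAux.det_inv_le (hSk k) (fun μ hμ => (hspec k μ hμ).2)
  have hdet_pos : ∀ k, 0 < (ψ0.cov k).det := fun k => (hSk k).det_pos
  have hhalf : ∀ k, (ψ0.cov k).det ^ (-(1:ℝ)/2) ≤ ASig ^ ((q:ℝ)/2) :=
    fun k => SGaMEAux.det_neg_half_le (hSk k) hASig (hdetk k)
  have key : ∀ x : Fin p → ℝ,
      ∫ y : Fin q → ℝ, Real.log (ψ0.density x y) * ψ0.density x y ≤ Real.log C := by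
    intro x
    set g : Fin K → ℝ := fun k => ψ0.gate k x with hgdef
    set φ : Fin K → (Fin q → ℝ) → ℝ := fun k => gaussPdf q (ψ0.mean k x) (ψ0.cov k) with hφdef
    have hdenpos : 0 < ∑ l, Real.exp (ψ0.logit l x) :=
      Finset.sum_pos (fun l _ => Real.exp_pos _) ⟨⟨0, hK⟩, Finset.mem_univ _⟩
    have hgpos : ∀ k, 0 ≤ g k := fun k =>
      div_nonneg (Real.exp_pos _).le hdenpos.le
    have hgsum : ∑ k, g k = 1 := by
      rw [hgdef]
      unfold SGaMEParam.gate
      rw [← Finset.sum_div, div_self hdenpos.ne']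
    have hgle : ∀ k, g k ≤ 1 := fun k => by
      have h := Finset.single_le_sum (f := g) (fun i _ => hgpos i) (Finset.mem_univ k)
      rwa [hgsum] at h
    have hs : ∀ y, ψ0.density x y = ∑ k, g k * φ k y := fun y => rfl
    have hsfun : ψ0.density x = fun y => ∑ k, g k * φ k y := rfl
    have hφ_nonneg : ∀ k y, 0 ≤ φ k y := fun k y => SGaMEAux.gaussPdf_nonneg (hSk k) y
    have hφ_int : ∀ k, Integrable (φ k) := fun k => SGaMEAux.integrable_gaussPdf (hSk k)
    have hφ_integral : ∀ k, ∫ y, φ k y = 1 := fun k => SGaMEAux.integral_gaussPdf (hSk k)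
    have hφsq_int : ∀ k, Integrable (fun y => (φ k y)^2) :=
      fun k => SGaMEAux.integrable_sq_gaussPdf (hSk k)
    have hφsq_integral : ∀ k, ∫ y, (φ k y)^2 ≤ C := fun k => by
      rw [hφdef]
      rw [SGaMEAux.integral_sq_gaussPdf (hSk k), hC]
      have h1 : ((ψ0.cov k).det⁻¹)^((1:ℝ)/2) ≤ ASig^((q:ℝ)/2) := by
        have e1 : ((ψ0.cov k).det⁻¹)^((1:ℝ)/2) = (ψ0.cov k).det ^ (-(1:ℝ)/2) := by
          rw [Real.inv_rpow (hdet_pos k).le, show (-(1:ℝ)/2) = -((1:ℝ)/2) by norm_num,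
            Real.rpow_neg (hdet_pos k).le]
        rw [e1]; exact hhalf k
      exact mul_le_mul_of_nonneg_left h1 (by positivity)
    set M0 := (2*π)^(-(q:ℝ)/2) * ASig^((q:ℝ)/2) with hM0
    have hφ_le : ∀ k y, φ k y ≤ M0 := fun k y => by
      calc φ k y ≤ (2*π)^(-(q:ℝ)/2) * (ψ0.cov k).det^(-(1:ℝ)/2) :=
          SGaMEAux.gaussPdf_le (hSk k) y
      _ ≤ M0 := by
          rw [hM0]
          exact mul_le_mul_of_nonneg_left (hhalf k) (by positivity)
    have hs_nonneg : ∀ y, 0 ≤ ψ0.density x y := fun y => by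
      rw [hs]; exact Finset.sum_nonneg fun k _ => mul_nonneg (hgpos k) (hφ_nonneg k y)
    have hM0pos : 0 < M0 := by rw [hM0]; positivity
    have hs_le : ∀ y, ψ0.density x y ≤ M0 := fun y => by
      rw [hs]
      calc ∑ k, g k * φ k y ≤ ∑ k, g k * M0 :=
          Finset.sum_le_sum (fun k _ => mul_le_mul_of_nonneg_left (hφ_le k y) (hgpos k))
      _ = M0 := by rw [← Finset.sum_mul, hgsum, one_mul]
    have hs_cont : Continuous (ψ0.density x) := by
      rw [hsfun]
      exact continuous_finset_sum _ (fun k _ =>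
        continuous_const.mul SGaMEAux.continuous_gaussPdf)
    have hs_int : Integrable (ψ0.density x) := by
      rw [hsfun]
      exact integrable_finset_sum _ (fun k _ => (hφ_int k).const_mul _)
    have hs_integral : ∫ y, ψ0.density x y = 1 := by
      rw [hsfun, integral_finset_sum _ (fun k _ => (hφ_int k).const_mul _)]
      simp_rw [integral_const_mul]
      calc ∑ k, g k * ∫ y, φ k y = ∑ k, g k := by
            refine Finset.sum_congr rfl (fun k _ => ?_)
            rw [hφ_integral k, mul_one]
      _ = 1 := hgsum
    have hsq_le : ∀ y, (ψ0.density x y)^2 ≤ ∑ k, g k * (φ k y)^2 := fun y => by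
      rw [hs]
      have h := Finset.sum_sq_le_sum_mul_sum_of_sq_eq_mul Finset.univ
        (r := fun k => g k * φ k y) (f := g) (g := fun k => g k * (φ k y)^2)
        (fun i _ => hgpos i) (fun i _ => mul_nonneg (hgpos i) (sq_nonneg _))
        (fun i _ => by ring)
      rwa [hgsum, one_mul] at h
    have hsqsum_int : Integrable (fun y => ∑ k, g k * (φ k y)^2) :=
      integrable_finset_sum _ (fun k _ => (hφsq_int k).const_mul _)
    have hsq_int : Integrable (fun y => (ψ0.density x y)^2) := by
      refine Integrable.mono' hsqsum_int (hs_cont.pow 2).aestronglyMeasurable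
        (Filter.Eventually.of_forall (fun y => ?_))
      rw [Real.norm_eq_abs, abs_of_nonneg (sq_nonneg _)]
      exact hsq_le y
    have hsq_integral : ∫ y, (ψ0.density x y)^2 ≤ C := by
      calc ∫ y, (ψ0.density x y)^2 ≤ ∫ y, ∑ k, g k * (φ k y)^2 :=
          integral_mono hsq_int hsqsum_int hsq_le
      _ = ∑ k, g k * ∫ y, (φ k y)^2 := by
          rw [integral_finset_sum _ (fun k _ => (hφsq_int k).const_mul _)]
          simp_rw [integral_const_mul]
      _ ≤ ∑ k, g k * C :=
          Finset.sum_le_sum (fun k _ => mul_le_mul_of_nonneg_left (hφsq_integral k) (hgpos k))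
      _ = C := by rw [← Finset.sum_mul, hgsum, one_mul]
    have hsqrt_int : Integrable (fun y => Real.sqrt (ψ0.density x y)) := by
      refine Integrable.mono'
        (integrable_finset_sum (f := fun k y => Real.sqrt (φ k y)) Finset.univ
          (fun (k : Fin K) _ => SGaMEAux.integrable_sqrt_gaussPdf (hSk k)))
        (Real.continuous_sqrt.comp hs_cont).aestronglyMeasurable
        (Filter.Eventually.of_forall (fun y => ?_))
      rw [Real.norm_eq_abs, abs_of_nonneg (Real.sqrt_nonneg _), hs]
      calc Real.sqrt (∑ k, g k * φ k y) ≤ ∑ k, Real.sqrt (g k * φ k y) :=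
          SGaMEAux.sqrt_sum_le _ _ (fun k => mul_nonneg (hgpos k) (hφ_nonneg k y))
      _ ≤ ∑ k, Real.sqrt (φ k y) := by
          refine Finset.sum_le_sum (fun k _ => ?_)
          rw [Real.sqrt_mul (hgpos k)]
          have hg1 : Real.sqrt (g k) ≤ 1 := by
            rw [show (1:ℝ) = Real.sqrt 1 from (Real.sqrt_one).symm]
            exact Real.sqrt_le_sqrt (hgle k)
          exact mul_le_of_le_one_left (Real.sqrt_nonneg _) hg1
    set M := max 1 M0 with hM
    have hM1 : (1:ℝ) ≤ M := le_max_left _ _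
    have hsM : ∀ y, ψ0.density x y ≤ M := fun y => (hs_le y).trans (le_max_right _ _)
    have hlogM : 0 ≤ Real.log M := Real.log_nonneg hM1
    have hdom : ∀ y, ‖Real.log (ψ0.density x y) * ψ0.density x y‖
        ≤ 2 * Real.sqrt (ψ0.density x y) + Real.log M * ψ0.density x y := by
      intro y
      have ht0 : 0 ≤ ψ0.density x y := hs_nonneg y
      have htM : ψ0.density x y ≤ M := hsM y
      set t := ψ0.density x y with htdef
      rcases eq_or_lt_of_le ht0 with h0 | h0
      · rw [← h0]; simp
      rcases le_or_gt t 1 with h1 | h1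
      · have hlt : Real.log t ≤ 0 := Real.log_nonpos ht0 h1
        rw [Real.norm_eq_abs, abs_mul, abs_of_nonneg ht0, abs_of_nonpos hlt]
        have hst : 0 < Real.sqrt t := Real.sqrt_pos.mpr h0
        have hinv : Real.log (Real.sqrt t)⁻¹ ≤ (Real.sqrt t)⁻¹ - 1 :=
          Real.log_le_sub_one_of_pos (by positivity)
        rw [Real.log_inv] at hinv
        have hlogt : Real.log t = 2 * Real.log (Real.sqrt t) := by
          conv_lhs => rw [← Real.sq_sqrt ht0]
          rw [Real.log_pow]
          norm_num
        have h5 : -Real.log t ≤ 2 * (Real.sqrt t)⁻¹ := by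
          rw [hlogt]; linarith
        have h6 : (-Real.log t) * t ≤ (2 * (Real.sqrt t)⁻¹) * t :=
          mul_le_mul_of_nonneg_right h5 ht0
        have htt : Real.sqrt t * Real.sqrt t = t := Real.mul_self_sqrt ht0
        have h7 : (2 * (Real.sqrt t)⁻¹) * t = 2 * Real.sqrt t := by
          field_simp
          linarith [htt]
        rw [h7] at h6
        have h8 : 0 ≤ Real.log M * t := mul_nonneg hlogM ht0
        linarith
      · have hlt : 0 ≤ Real.log t := Real.log_nonneg h1.le
        rw [Real.norm_eq_abs, abs_mul, abs_of_nonneg ht0, abs_of_nonneg hlt]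
        have h9 : Real.log t ≤ Real.log M := Real.log_le_log (by linarith) htM
        have h10 : Real.log t * t ≤ Real.log M * t :=
          mul_le_mul_of_nonneg_right h9 ht0
        have : 0 ≤ 2 * Real.sqrt t := by positivity
        linarith
    have hlog_meas : AEStronglyMeasurable
        (fun y => Real.log (ψ0.density x y) * ψ0.density x y) volume :=
      ((Real.measurable_log.comp hs_cont.measurable).mul hs_cont.measurable).aestronglyMeasurable
    have hint_ls : Integrable (fun y => Real.log (ψ0.density x y) * ψ0.density x y) :=
      Integrable.mono' ((hsqrt_int.const_mul 2).add (hs_int.const_mul (Real.log M)))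
        hlog_meas (Filter.Eventually.of_forall hdom)
    have hpt : ∀ y, Real.log (ψ0.density x y) * ψ0.density x y
        ≤ (Real.log C - 1) * ψ0.density x y + (ψ0.density x y)^2 / C := by
      intro y
      have ht0 : 0 ≤ ψ0.density x y := hs_nonneg y
      set t := ψ0.density x y with htdef
      rcases eq_or_lt_of_le ht0 with h0 | h0
      · rw [← h0]; simp
      · have h1 : Real.log (t / C) ≤ t/C - 1 := Real.log_le_sub_one_of_pos (by positivity)
        rw [Real.log_div h0.ne' hCpos.ne'] at h1
        have h2 : Real.log t ≤ Real.log C + t/C - 1 := by linarith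
        calc Real.log t * t ≤ (Real.log C + t/C - 1) * t :=
            mul_le_mul_of_nonneg_right h2 ht0
        _ = (Real.log C - 1) * t + t^2/C := by ring
    have hrhs_int : Integrable
        (fun y => (Real.log C - 1) * ψ0.density x y + (ψ0.density x y)^2 / C) :=
      (hs_int.const_mul _).add (hsq_int.div_const C)
    calc ∫ y, Real.log (ψ0.density x y) * ψ0.density x y
        ≤ ∫ y, ((Real.log C - 1) * ψ0.density x y + (ψ0.density x y)^2 / C) :=
          integral_mono hint_ls hrhs_int hpt
    _ = (Real.log C - 1) * (∫ y, ψ0.density x y) + (∫ y, (ψ0.density x y)^2)/C := by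
          rw [integral_add (hs_int.const_mul _) (hsq_int.div_const C),
            integral_const_mul, integral_div]
    _ ≤ (Real.log C - 1) * 1 + C/C := by
          rw [hs_integral]
          have h11 : (∫ y, (ψ0.density x y)^2)/C ≤ C/C :=
            (div_le_div_iff_of_pos_right hCpos).mpr hsq_integral
          linarith
    _ = Real.log C := by rw [div_self hCpos.ne']; ring
  refine ⟨fun x _ => key x, ?_⟩
  have hne : Nonempty (cube p) := ⟨⟨0, Set.mem_Icc.mpr ⟨le_rfl, zero_le_one⟩⟩⟩
  have hsup : (⨆ x : cube p,
      ∫ y : Fin q → ℝ, Real.log (ψ0.density (x : Fin p → ℝ) y) * ψ0.density x y)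
      ≤ Real.log C := ciSup_le (fun x => key x)
  rw [Hs0]
  exact max_le_max le_rfl hsup
end

section
/- (Uniform sup-norm bound on log-likelihood ratios over the model class). Let B_n = max(A_Σ, 1+K·A_G)·(1 + q√q·(M_n + A_β)²·A_Σ) for M_n > 0. Then for every s_ψ ∈ S with ψ ∈ Ψ̃, every x ∈ [0,1]^p, and every y ∈ ℝ^q with ‖y‖_∞ ≤ M_n: |ln s_ψ(y|x) − ln s_{ψ_0}(y|x)| ≤ 2·K·B_n·(A_γ + q·A_β + q√q/a_Σ). In particular, on the event T = {max_i ‖Y_i‖_∞ ≤ M_n}, sup_{f ∈ F_m} ‖f‖_∞·1_T ≤ 2·K·B_n·(A_γ + q·A_β + q√q/a_Σ) for every m ∈ ℕ*. -/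
open MeasureTheory Real Finset ProbabilityTheory

open Matrix in
lemma aux_quad_upper {q : ℕ} {T : Matrix (Fin q) (Fin q) ℝ} (hT : T.PosDef)
    {A : ℝ} (hev : ∀ i, hT.isHermitian.eigenvalues i ≤ A) (v : Fin q → ℝ) :
    dotProduct v (T.mulVec v) ≤ A * dotProduct v v := by
  have hH := hT.isHermitian
  set U : Matrix (Fin q) (Fin q) ℝ := (hH.eigenvectorUnitary : Matrix (Fin q) (Fin q) ℝ) with hU
  have hd : (Matrix.diagonal (fun i => A - hH.eigenvalues i)).PosSemidef :=
    Matrix.PosSemidef.diagonal (fun i => sub_nonneg.2 (hev i))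
  have h2 := hd.mul_mul_conjTranspose_same U
  have hUU : U * star U = 1 := (Matrix.mem_unitaryGroup_iff).mp hH.eigenvectorUnitary.2
  have heq : U * Matrix.diagonal (fun i => A - hH.eigenvalues i) * Uᴴ
      = A • (1 : Matrix (Fin q) (Fin q) ℝ) - T := by
    rw [← Matrix.star_eq_conjTranspose]
    have hdiag : Matrix.diagonal (fun i => A - hH.eigenvalues i)
        = A • (1 : Matrix (Fin q) (Fin q) ℝ)
          - Matrix.diagonal (RCLike.ofReal ∘ hH.eigenvalues) := by
      rw [Matrix.smul_one_eq_diagonal, ← Matrix.diagonal_sub]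
      congr 1
    rw [hdiag, Matrix.mul_sub, Matrix.sub_mul, show U * Matrix.diagonal (RCLike.ofReal ∘ hH.eigenvalues) * star U = T from hH.spectral_theorem.symm]
    congr 1
    rw [mul_smul_comm, mul_one, smul_mul_assoc, hUU]
  rw [heq] at h2
  have h3 := h2.re_dotProduct_nonneg v
  simp only [RCLike.re_to_real, star_trivial] at h3
  rw [Matrix.sub_mulVec, dotProduct_sub, Matrix.smul_mulVec,
    Matrix.one_mulVec, dotProduct_smul] at h3
  simp only [smul_eq_mul] at h3
  linarith

lemma aux_gauss_bounds {q : ℕ} {S : Matrix (Fin q) (Fin q) ℝ} (hS : S.PosDef)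
    {a A : ℝ} (ha : 0 < a) (hA : 0 < A)
    (hspec : ∀ μ ∈ spectrum ℝ S⁻¹, a ≤ μ ∧ μ ≤ A)
    (mu y : Fin q → ℝ) {R : ℝ} (hquad : ∑ i, (y i - mu i) ^ 2 ≤ R) :
    (2 * π) ^ (-(q : ℝ) / 2) * a ^ ((q : ℝ) / 2) * Real.exp (-(A * R) / 2)
      ≤ gaussPdf q mu S y ∧
    gaussPdf q mu S y ≤ (2 * π) ^ (-(q : ℝ) / 2) * A ^ ((q : ℝ) / 2) := by
  have hT : (S⁻¹).PosDef := hS.inv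
  have hH := hT.isHermitian
  have hev : ∀ i, a ≤ hH.eigenvalues i ∧ hH.eigenvalues i ≤ A :=
    fun i => hspec _ (hH.eigenvalues_mem_spectrum_real i)
  have hdet : (S⁻¹).det = ∏ i, hH.eigenvalues i := by
    have := hH.det_eq_prod_eigenvalues
    simpa using this
  have hca : a ^ q = ∏ _i : Fin q, a := by simp
  have hcA : A ^ q = ∏ _i : Fin q, A := by simp
  have hdl : a ^ q ≤ (S⁻¹).det := by
    rw [hdet, hca]
    exact Finset.prod_le_prod (fun i _ => ha.le) (fun i _ => (hev i).1)
  have hdu : (S⁻¹).det ≤ A ^ q := by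
    rw [hdet, hcA]
    exact Finset.prod_le_prod (fun i _ => (ha.trans_le (hev i).1).le) (fun i _ => (hev i).2)
  have hdetpos : 0 < (S⁻¹).det := hT.det_pos
  have hSdet : S.det = (S⁻¹).det⁻¹ := by
    rw [Matrix.det_nonsing_inv, Ring.inverse_eq_inv, inv_inv]
  have hrpow : S.det ^ (-(1 : ℝ) / 2) = (S⁻¹).det ^ ((1 : ℝ) / 2) := by
    rw [hSdet, Real.inv_rpow hdetpos.le, show (-(1:ℝ)/2) = -(1/2 : ℝ) by norm_num,
      Real.rpow_neg hdetpos.le, inv_inv]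
  have hrl : a ^ ((q : ℝ) / 2) ≤ S.det ^ (-(1 : ℝ) / 2) := by
    rw [hrpow]
    calc a ^ ((q : ℝ) / 2) = (a ^ q) ^ ((1 : ℝ) / 2) := by
          rw [← Real.rpow_natCast a q, ← Real.rpow_mul ha.le]; ring_nf
      _ ≤ (S⁻¹).det ^ ((1 : ℝ) / 2) :=
          Real.rpow_le_rpow (pow_nonneg ha.le q) hdl (by norm_num)
  have hru : S.det ^ (-(1 : ℝ) / 2) ≤ A ^ ((q : ℝ) / 2) := by
    rw [hrpow]
    calc (S⁻¹).det ^ ((1 : ℝ) / 2) ≤ (A ^ q) ^ ((1 : ℝ) / 2) :=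
          Real.rpow_le_rpow hdetpos.le hdu (by norm_num)
      _ = A ^ ((q : ℝ) / 2) := by
          rw [← Real.rpow_natCast A q, ← Real.rpow_mul hA.le]; ring_nf
  set v := y - mu with hv
  have hq0 : 0 ≤ dotProduct v ((S⁻¹).mulVec v) := by
    have := hT.posSemidef.re_dotProduct_nonneg v
    simpa using this
  have hqu : dotProduct v ((S⁻¹).mulVec v) ≤ A * R := by
    have h1 := aux_quad_upper hT (fun i => (hev i).2) v
    have h2 : dotProduct v v = ∑ i, (y i - mu i) ^ 2 := by
      simp [dotProduct, hv, pow_two]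
    calc dotProduct v ((S⁻¹).mulVec v) ≤ A * dotProduct v v := h1
      _ = A * ∑ i, (y i - mu i) ^ 2 := by rw [h2]
      _ ≤ A * R := by nlinarith
  have hexpl : Real.exp (-(A * R) / 2) ≤ Real.exp (-(dotProduct v ((S⁻¹).mulVec v)) / 2) :=
    Real.exp_le_exp.2 (by linarith)
  have hexpu : Real.exp (-(dotProduct v ((S⁻¹).mulVec v)) / 2) ≤ 1 := by
    rw [Real.exp_le_one_iff]; linarith
  have hc : 0 < (2 * π) ^ (-(q : ℝ) / 2) :=
    Real.rpow_pos_of_pos (by positivity) _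
  constructor
  · unfold gaussPdf
    rw [← hv]
    calc (2 * π) ^ (-(q : ℝ) / 2) * a ^ ((q : ℝ) / 2) * Real.exp (-(A * R) / 2)
        ≤ (2 * π) ^ (-(q : ℝ) / 2) * S.det ^ (-(1 : ℝ) / 2) * Real.exp (-(A * R) / 2) := by
          have := mul_le_mul_of_nonneg_left hrl hc.le
          exact mul_le_mul_of_nonneg_right this (Real.exp_pos _).le
      _ ≤ (2 * π) ^ (-(q : ℝ) / 2) * S.det ^ (-(1 : ℝ) / 2)
            * Real.exp (-(dotProduct v ((S⁻¹).mulVec v)) / 2) := by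
          exact mul_le_mul_of_nonneg_left hexpl
            (mul_pos hc (Real.rpow_pos_of_pos hS.det_pos _)).le
  · unfold gaussPdf
    rw [← hv]
    calc (2 * π) ^ (-(q : ℝ) / 2) * S.det ^ (-(1 : ℝ) / 2)
          * Real.exp (-(dotProduct v ((S⁻¹).mulVec v)) / 2)
        ≤ (2 * π) ^ (-(q : ℝ) / 2) * S.det ^ (-(1 : ℝ) / 2) * 1 := by
          exact mul_le_mul_of_nonneg_left hexpu
            (mul_pos hc (Real.rpow_pos_of_pos hS.det_pos _)).le
      _ = (2 * π) ^ (-(q : ℝ) / 2) * S.det ^ (-(1 : ℝ) / 2) := by ring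
      _ ≤ (2 * π) ^ (-(q : ℝ) / 2) * A ^ ((q : ℝ) / 2) :=
          mul_le_mul_of_nonneg_left hru hc.le

lemma aux_density_bounds {K p q : ℕ} (hK : 1 ≤ K) (ψ : SGaMEParam K p q) (x : Fin p → ℝ)
    (y : Fin q → ℝ) {L U : ℝ}
    (h : ∀ k, L ≤ gaussPdf q (ψ.mean k x) (ψ.cov k) y ∧
        gaussPdf q (ψ.mean k x) (ψ.cov k) y ≤ U) :
    L ≤ ψ.density x y ∧ ψ.density x y ≤ U := by
  have hKne : Nonempty (Fin K) := ⟨⟨0, hK⟩⟩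
  have hSg : 0 < ∑ l, Real.exp (ψ.logit l x) :=
    Finset.sum_pos (fun l _ => Real.exp_pos _) Finset.univ_nonempty
  have hgate : ∀ k, 0 ≤ ψ.gate k x := fun k => div_nonneg (Real.exp_pos _).le hSg.le
  have hsum : ∑ k, ψ.gate k x = 1 := by
    unfold SGaMEParam.gate
    rw [← Finset.sum_div, div_self hSg.ne']
  constructor
  · calc L = (∑ k, ψ.gate k x) * L := by rw [hsum, one_mul]
      _ = ∑ k, ψ.gate k x * L := by rw [Finset.sum_mul]
      _ ≤ ∑ k, ψ.gate k x * gaussPdf q (ψ.mean k x) (ψ.cov k) y :=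
          Finset.sum_le_sum (fun k _ => mul_le_mul_of_nonneg_left (h k).1 (hgate k))
      _ = ψ.density x y := rfl
  · calc ψ.density x y = ∑ k, ψ.gate k x * gaussPdf q (ψ.mean k x) (ψ.cov k) y := rfl
      _ ≤ ∑ k, ψ.gate k x * U :=
          Finset.sum_le_sum (fun k _ => mul_le_mul_of_nonneg_left (h k).2 (hgate k))
      _ = (∑ k, ψ.gate k x) * U := by rw [Finset.sum_mul]
      _ = U := by rw [hsum, one_mul]

set_option maxHeartbeats 1000000 in
lemma aux_main {K p q : ℕ} (hK : 1 ≤ K) (hq : 1 ≤ q)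
    {Agam Abeta aSig ASig : ℝ} (hAgam : 0 < Agam) (hAbeta : 0 < Abeta)
    (haSig : 0 < aSig) (hASig : 0 < ASig) {Mn : ℝ} (hMn : 0 < Mn)
    (ψ ψ0 : SGaMEParam K p q) (hψ : InPsiT Agam Abeta aSig ASig ψ)
    (hψ0 : InPsiT Agam Abeta aSig ASig ψ0)
    (x : Fin p → ℝ) (hx : x ∈ cube p) (y : Fin q → ℝ) (hy : ∀ z, |y z| ≤ Mn) :
    |Real.log (ψ.density x y) - Real.log (ψ0.density x y)| ≤
      2 * K * (max ASig (1 + K * AGbd K Agam) *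
          (1 + q * Real.sqrt q * (Mn + Abeta) ^ 2 * ASig)) *
        (Agam + q * Abeta + q * Real.sqrt q / aSig) := by
  set Q : ℝ := (q : ℝ) with hQdef
  have hQ1 : (1 : ℝ) ≤ Q := by rw [hQdef]; exact_mod_cast hq
  set M2 : ℝ := (Mn + Abeta) ^ 2 with hM2def
  have hQ0 : (0 : ℝ) ≤ Q := zero_le_one.trans hQ1
  have hM2 : 0 ≤ M2 := sq_nonneg _
  set R : ℝ := Q * M2 with hRdef
  set L : ℝ := (2 * π) ^ (-(q : ℝ) / 2) * aSig ^ ((q : ℝ) / 2) * Real.exp (-(ASig * R) / 2)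
    with hLdef
  set U : ℝ := (2 * π) ^ (-(q : ℝ) / 2) * ASig ^ ((q : ℝ) / 2) with hUdef
  have hc : 0 < (2 * π) ^ (-(q : ℝ) / 2) := Real.rpow_pos_of_pos (by positivity) _
  have hLpos : 0 < L :=
    mul_pos (mul_pos hc (Real.rpow_pos_of_pos haSig _)) (Real.exp_pos _)
  have hUpos : 0 < U := mul_pos hc (Real.rpow_pos_of_pos hASig _)
  -- quadratic sum bound for any ψ' in the class
  have hquad : ∀ ψ' : SGaMEParam K p q, InPsiT Agam Abeta aSig ASig ψ' → ∀ k,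
      ∑ i, (y i - ψ'.mean k x i) ^ 2 ≤ R := by
    intro ψ' hψ' k
    have hterm : ∀ i, (y i - ψ'.mean k x i) ^ 2 ≤ M2 := by
      intro i
      have h1 := abs_le.1 (hy i)
      have h3 : |ψ'.mean k x i| ≤ Abeta := by
        unfold SGaMEParam.mean
        exact (abs_add_le _ _).trans (hψ'.2.2.1 k x hx i)
      have h4 := abs_le.1 h3
      have ha1 : 0 ≤ (Mn + Abeta) - (y i - ψ'.mean k x i) := by
        obtain ⟨_, _⟩ := h1; obtain ⟨_, _⟩ := h4; linarith
      have ha2 : 0 ≤ (Mn + Abeta) + (y i - ψ'.mean k x i) := by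
        obtain ⟨_, _⟩ := h1; obtain ⟨_, _⟩ := h4; linarith
      nlinarith [mul_nonneg ha1 ha2]
    calc ∑ i, (y i - ψ'.mean k x i) ^ 2 ≤ ∑ _i : Fin q, M2 :=
          Finset.sum_le_sum (fun i _ => hterm i)
      _ = Q * M2 := by simp [hQdef, mul_comm]
  -- density bounds
  have hbd : ∀ ψ' : SGaMEParam K p q, InPsiT Agam Abeta aSig ASig ψ' →
      L ≤ ψ'.density x y ∧ ψ'.density x y ≤ U := by
    intro ψ' hψ'
    exact aux_density_bounds hK ψ' x y (fun k =>
      aux_gauss_bounds (hψ'.1 k).2 haSig hASig (hψ'.2.2.2 k) _ y (hquad ψ' hψ' k))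
  obtain ⟨hl1, hu1⟩ := hbd ψ hψ
  obtain ⟨hl2, hu2⟩ := hbd ψ0 hψ0
  have hlog1l : Real.log L ≤ Real.log (ψ.density x y) := Real.log_le_log hLpos hl1
  have hlog1u : Real.log (ψ.density x y) ≤ Real.log U :=
    Real.log_le_log (hLpos.trans_le hl1) hu1
  have hlog2l : Real.log L ≤ Real.log (ψ0.density x y) := Real.log_le_log hLpos hl2
  have hlog2u : Real.log (ψ0.density x y) ≤ Real.log U :=
    Real.log_le_log (hLpos.trans_le hl2) hu2
  have hstep0 : |Real.log (ψ.density x y) - Real.log (ψ0.density x y)| ≤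
      Real.log U - Real.log L := by
    rw [abs_sub_le_iff]; constructor <;> linarith
  -- compute log U - log L
  have hlogU : Real.log U = Real.log ((2 * π) ^ (-(q : ℝ) / 2)) + Q / 2 * Real.log ASig := by
    rw [hUdef, Real.log_mul hc.ne' (Real.rpow_pos_of_pos hASig _).ne', Real.log_rpow hASig]
  have hlogL : Real.log L = Real.log ((2 * π) ^ (-(q : ℝ) / 2)) + Q / 2 * Real.log aSig
      + (-(ASig * R) / 2) := by
    rw [hLdef, Real.log_mul (mul_pos hc (Real.rpow_pos_of_pos haSig _)).ne' (Real.exp_pos _).ne',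
      Real.log_mul hc.ne' (Real.rpow_pos_of_pos haSig _).ne', Real.log_exp, Real.log_rpow haSig]
  have hdiff : Real.log U - Real.log L = Q / 2 * (Real.log ASig - Real.log aSig)
      + ASig * R / 2 := by
    rw [hlogU, hlogL]; ring
  -- aSig ≤ ASig
  have haA : aSig ≤ ASig := by
    have hT : ((ψ0.cov ⟨0, hK⟩)⁻¹).PosDef := (hψ0.1 ⟨0, hK⟩).2.inv
    have hH := hT.isHermitian
    have := hψ0.2.2.2 ⟨0, hK⟩ _ (hH.eigenvalues_mem_spectrum_real ⟨0, hq⟩)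
    linarith [this.1, this.2]
  have hlogratio : Real.log ASig - Real.log aSig ≤ ASig / aSig := by
    have h1 := Real.log_le_sub_one_of_pos (div_pos hASig haSig)
    rw [Real.log_div hASig.ne' haSig.ne'] at h1
    have : (0 : ℝ) < ASig / aSig := div_pos hASig haSig
    linarith
  -- arithmetic to reach the stated bound
  set s : ℝ := Real.sqrt q with hsdef
  have hs1 : (1 : ℝ) ≤ s := by
    rw [hsdef, show (1 : ℝ) = Real.sqrt 1 by simp]
    exact Real.sqrt_le_sqrt hQ1
  have hss : s * s = Q := Real.mul_self_sqrt (by positivity)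
  set u : ℝ := aSig⁻¹ with hudef
  have hu : 0 < u := inv_pos.2 haSig
  have hAu : 1 ≤ ASig * u := by
    rw [← mul_inv_cancel₀ haSig.ne']
    exact mul_le_mul_of_nonneg_right haA hu.le
  have hstep1 : Q / 2 * (ASig / aSig) + ASig * R / 2 ≤
      2 * (ASig * (1 + Q * s * M2 * ASig)) * (Q * s / aSig) := by
    rw [div_eq_mul_inv ASig, div_eq_mul_inv (Q * s), ← hudef, hRdef]
    have hA1 : 0 < ASig * u := mul_pos hASig hu
    have hrhs : 2 * (ASig * (1 + Q * s * M2 * ASig)) * (Q * s * u)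
        = 2 * Q * s * (ASig * u) + 2 * Q * Q * Q * M2 * ASig * (ASig * u) := by
      rw [← hss]; ring
    have partA : Q / 2 * (ASig * u) ≤ 2 * Q * s * (ASig * u) := by
      nlinarith [mul_nonneg hQ0 hA1.le,
        mul_nonneg (mul_nonneg hQ0 (sub_nonneg.2 hs1)) hA1.le]
    have hQQ : 1 ≤ Q * Q := by nlinarith
    have partB : ASig * (Q * M2) / 2 ≤ 2 * Q * Q * Q * M2 * ASig * (ASig * u) := by
      nlinarith [mul_le_mul_of_nonneg_left hAu
          (show (0:ℝ) ≤ 2 * Q * Q * Q * M2 * ASig by positivity),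
        mul_nonneg (mul_nonneg (mul_nonneg (sub_nonneg.2 hQQ) hQ0) hM2) hASig.le,
        mul_nonneg (mul_nonneg hQ0 hM2) hASig.le]
    rw [hrhs]
    linarith
  have hXnn : (0 : ℝ) ≤ 1 + K * AGbd K Agam := by
    have : (0 : ℝ) ≤ AGbd K Agam := by
      unfold AGbd
      positivity
    positivity
  have hF1nn : (0 : ℝ) ≤ ASig * (1 + Q * s * M2 * ASig) := by positivity
  have hF : ASig * (1 + Q * s * M2 * ASig) ≤
      max ASig (1 + K * AGbd K Agam) * (1 + Q * s * M2 * ASig) := by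
    apply mul_le_mul_of_nonneg_right (le_max_left _ _)
    positivity
  have hC1nn : (0 : ℝ) ≤ Q * s / aSig := by positivity
  have hC : Q * s / aSig ≤ Agam + Q * Abeta + Q * s / aSig := by nlinarith
  have hKr : (1 : ℝ) ≤ (K : ℝ) := by exact_mod_cast hK
  have h12 : ASig * (1 + Q * s * M2 * ASig) * (Q * s / aSig) ≤
      max ASig (1 + K * AGbd K Agam) * (1 + Q * s * M2 * ASig)
        * (Agam + Q * Abeta + Q * s / aSig) :=
    mul_le_mul hF hC hC1nn (hF1nn.trans hF)
  have hF2C2nn : (0 : ℝ) ≤ max ASig (1 + K * AGbd K Agam) * (1 + Q * s * M2 * ASig)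
        * (Agam + Q * Abeta + Q * s / aSig) := (mul_nonneg hF1nn hC1nn).trans h12
  have hstep2 : 2 * (ASig * (1 + Q * s * M2 * ASig)) * (Q * s / aSig) ≤
      2 * K * (max ASig (1 + K * AGbd K Agam) * (1 + Q * s * M2 * ASig))
        * (Agam + Q * Abeta + Q * s / aSig) := by
    have h2K : (2 : ℝ) ≤ 2 * K := by linarith
    calc 2 * (ASig * (1 + Q * s * M2 * ASig)) * (Q * s / aSig)
        = 2 * (ASig * (1 + Q * s * M2 * ASig) * (Q * s / aSig)) := by ring
      _ ≤ 2 * (max ASig (1 + K * AGbd K Agam) * (1 + Q * s * M2 * ASig)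
            * (Agam + Q * Abeta + Q * s / aSig)) := by linarith
      _ ≤ 2 * K * (max ASig (1 + K * AGbd K Agam) * (1 + Q * s * M2 * ASig)
            * (Agam + Q * Abeta + Q * s / aSig)) :=
          mul_le_mul_of_nonneg_right h2K hF2C2nn
      _ = 2 * K * (max ASig (1 + K * AGbd K Agam) * (1 + Q * s * M2 * ASig))
            * (Agam + Q * Abeta + Q * s / aSig) := by ring
  calc |Real.log (ψ.density x y) - Real.log (ψ0.density x y)|
      ≤ Real.log U - Real.log L := hstep0
    _ = Q / 2 * (Real.log ASig - Real.log aSig) + ASig * R / 2 := hdiff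
    _ ≤ Q / 2 * (ASig / aSig) + ASig * R / 2 := by
        have : Q / 2 * (Real.log ASig - Real.log aSig) ≤ Q / 2 * (ASig / aSig) :=
          mul_le_mul_of_nonneg_left hlogratio (by positivity)
        linarith
    _ ≤ 2 * (ASig * (1 + Q * s * M2 * ASig)) * (Q * s / aSig) := hstep1
    _ ≤ 2 * K * (max ASig (1 + K * AGbd K Agam) * (1 + Q * s * M2 * ASig))
          * (Agam + Q * Abeta + Q * s / aSig) := hstep2

/-- uniform sup-norm bound on log-likelihood ratios over the model class. -/
theorem sgame_logratio_sup_norm_bound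
    (K p q : ℕ) (hK : 1 ≤ K) (hp : 1 ≤ p) (hq : 1 ≤ q)
    (Agam Abeta aSig ASig : ℝ)
    (hAgam : 0 < Agam) (hAbeta : 0 < Abeta) (haSig : 0 < aSig) (hASig : 0 < ASig)
    (Mn : ℝ) (hMn : 0 < Mn)
    (ψ0 : SGaMEParam K p q) (hψ0 : InPsiT Agam Abeta aSig ASig ψ0) :
    (∀ ψ : SGaMEParam K p q, InPsiT Agam Abeta aSig ASig ψ →
      ∀ x ∈ cube p, ∀ y : Fin q → ℝ, (∀ z, |y z| ≤ Mn) →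
        |Real.log (ψ.density x y) - Real.log (ψ0.density x y)| ≤
          2 * K * (max ASig (1 + K * AGbd K Agam) *
              (1 + q * Real.sqrt q * (Mn + Abeta) ^ 2 * ASig)) *
            (Agam + q * Abeta + q * Real.sqrt q / aSig)) ∧
    -- in particular, a uniform bound over every ℓ1-ball S_m
    (∀ m : ℕ, 1 ≤ m →
      ∀ ψ : SGaMEParam K p q, InPsiT Agam Abeta aSig ASig ψ → ψ.norm12 ≤ m →
      ∀ x ∈ cube p, ∀ y : Fin q → ℝ, (∀ z, |y z| ≤ Mn) →
        |Real.log (ψ0.density x y) - Real.log (ψ.density x y)| ≤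
          2 * K * (max ASig (1 + K * AGbd K Agam) *
              (1 + q * Real.sqrt q * (Mn + Abeta) ^ 2 * ASig)) *
            (Agam + q * Abeta + q * Real.sqrt q / aSig)) := by
  constructor
  · intro ψ hψ x hx y hy
    exact aux_main hK hq hAgam hAbeta haSig hASig hMn ψ ψ0 hψ hψ0 x hx y hy
  · intro m hm ψ hψ hnorm x hx y hy
    rw [abs_sub_comm]
    exact aux_main hK hq hAgam hAbeta haSig hASig hMn ψ ψ0 hψ hψ0 x hx y hy
end

section
/- (Discretization of the ℓ1-ball under an empirical design norm). Let δ > 0 and (x_{ij})_{i∈[n], j∈[p]} ∈ ℝ^{np}, and set ‖x‖²_{max,n} = (1/n)Σ_{i=1}^n max_{j∈[p]} x_{ij}². There exists a family B of at most (2p+1)^{‖x‖²_{max,n}/δ²} vectors in ℝ^p such that for every β ∈ ℝ^p with ‖β‖_1 ≤ 1 there exists β' ∈ B with (1/n)Σ_{i=1}^n (Σ_{j=1}^p (β_j − β'_j)·x_{ij})² ≤ δ². -/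
open MeasureTheory Real Finset

open scoped RealInnerProductSpace

private lemma exists_le_expectation {V : Type*} [Fintype V] (μ c : V → ℝ)
    (h0 : ∀ v, 0 ≤ μ v) (h1 : ∑ v, μ v = 1) :
    ∃ v, c v ≤ ∑ v, μ v * c v := by
  by_contra h
  push_neg at h
  obtain ⟨v₀, hv₀⟩ : ∃ v, 0 < μ v := by
    by_contra h'
    push_neg at h'
    have : ∑ v, μ v ≤ 0 := Finset.sum_nonpos fun v _ => h' v
    linarith
  have hlt : ∑ v, μ v * (∑ v', μ v' * c v') < ∑ v, μ v * c v :=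
    Finset.sum_lt_sum (fun i _ => mul_le_mul_of_nonneg_left (h i).le (h0 i))
      ⟨v₀, Finset.mem_univ _, mul_lt_mul_of_pos_left (h v₀) hv₀⟩
  rw [← Finset.sum_mul, h1, one_mul] at hlt
  exact lt_irrefl _ hlt

lemma maurey {E : Type*} [NormedAddCommGroup E] [InnerProductSpace ℝ E]
    {V : Type*} [Fintype V] (w : V → E) (μ : V → ℝ) (y : E) (C : ℝ)
    (h0 : ∀ v, 0 ≤ μ v) (h1 : ∑ v, μ v = 1)
    (hy : ∑ v, μ v • w v = y)
    (hC : ∑ v, μ v * ‖w v - y‖ ^ 2 ≤ C) (S : ℕ) :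
    ∃ g : Fin S → V, ‖(∑ t, w (g t)) - (S : ℝ) • y‖ ^ 2 ≤ C * S := by
  induction S with
  | zero =>
    refine ⟨Fin.elim0, ?_⟩
    simp
  | succ S ih =>
    obtain ⟨g, hg⟩ := ih
    have hsum0 : ∑ v, μ v • (w v - y) = 0 := by
      simp only [smul_sub]
      rw [Finset.sum_sub_distrib, hy, ← Finset.sum_smul, h1, one_smul, sub_self]
    set A := (∑ t, w (g t)) - (S : ℝ) • y with hA
    have hexp : ∑ v, μ v * ‖A + (w v - y)‖ ^ 2
        = ‖A‖ ^ 2 + ∑ v, μ v * ‖w v - y‖ ^ 2 := by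
      have h' : ∀ v, μ v * ‖A + (w v - y)‖ ^ 2
          = μ v * ‖A‖ ^ 2 + 2 * ⟪A, μ v • (w v - y)⟫ + μ v * ‖w v - y‖ ^ 2 := by
        intro v
        rw [norm_add_sq_real, real_inner_smul_right]
        ring
      rw [Finset.sum_congr rfl fun v _ => h' v, Finset.sum_add_distrib,
        Finset.sum_add_distrib, ← Finset.sum_mul, h1, one_mul,
        ← Finset.mul_sum, ← inner_sum, hsum0, inner_zero_right, mul_zero, add_zero]
    obtain ⟨v, hv⟩ := exists_le_expectation μ (fun v => ‖A + (w v - y)‖ ^ 2) h0 h1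
    set g' : Fin (S + 1) → V := Fin.snoc g v with hg'
    refine ⟨g', ?_⟩
    have hsnoc : (∑ t : Fin (S + 1), w (g' t)) = (∑ t, w (g t)) + w v := by
      rw [Fin.sum_univ_castSucc]
      simp [hg']
    have hrw : (∑ t : Fin (S + 1), w (g' t)) - ((S + 1 : ℕ) : ℝ) • y
        = A + (w v - y) := by
      rw [hsnoc, hA]
      push_cast
      rw [add_smul, one_smul]
      abel
    rw [hrw]
    calc ‖A + (w v - y)‖ ^ 2 ≤ ∑ v, μ v * ‖A + (w v - y)‖ ^ 2 := hv
      _ = ‖A‖ ^ 2 + ∑ v, μ v * ‖w v - y‖ ^ 2 := hexp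
      _ ≤ C * S + C := add_le_add hg hC
      _ = C * ((S + 1 : ℕ) : ℝ) := by push_cast; ring

def vecAux (p : ℕ) : Option (Fin p × Bool) → Fin p → ℝ
  | none => 0
  | some q => fun k => if k = q.1 then (if q.2 then 1 else -1) else 0

@[simp] lemma vecAux_none (p : ℕ) : vecAux p none = 0 := rfl
@[simp] lemma vecAux_some (p : ℕ) (q : Fin p × Bool) (k : Fin p) :
    vecAux p (some q) k = if k = q.1 then (if q.2 then 1 else -1) else 0 := rfl

def XA {n p : ℕ} (x : Fin n → Fin p → ℝ) (u : Fin p → ℝ) : EuclideanSpace ℝ (Fin n) :=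
  WithLp.toLp 2 (fun i => ∑ j, u j * x i j)

@[simp] lemma XA_apply {n p : ℕ} (x : Fin n → Fin p → ℝ) (u : Fin p → ℝ) (i : Fin n) :
    XA x u i = ∑ j, u j * x i j := rfl

lemma normsq_eq {n : ℕ} (v : EuclideanSpace ℝ (Fin n)) : ‖v‖ ^ 2 = ∑ i, v i ^ 2 := by
  rw [EuclideanSpace.norm_eq, Real.sq_sqrt (by positivity)]
  simp [sq_abs]

/-- discretization of the ℓ1-ball under an empirical design norm,
Lemma 5.9 in Meynet. -/
theorem l1_ball_discretization
    (n p : ℕ) (hn : 1 ≤ n) (hp : 1 ≤ p)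
    (δ : ℝ) (hδ : 0 < δ)
    (x : Fin n → Fin p → ℝ) :
    ∃ B : Finset (Fin p → ℝ),
      B.card ≤ ⌈(2 * (p : ℝ) + 1) ^
          (((1 / n : ℝ) * ∑ i, ⨆ j, (x i j) ^ 2) / δ ^ 2)⌉₊ ∧
      ∀ β : Fin p → ℝ, (∑ j, |β j|) ≤ 1 →
        ∃ β' ∈ B, (1 / n : ℝ) * ∑ i, (∑ j, (β j - β' j) * x i j) ^ 2 ≤ δ ^ 2 := by
  have hn' : (0:ℝ) < n := by exact_mod_cast hn
  have hmx : ∀ i j, x i j ^ 2 ≤ ⨆ k, x i k ^ 2 := fun i j =>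
    le_ciSup (f := fun k => x i k ^ 2) (Set.finite_range _).bddAbove j
  have hm0 : ∀ i, 0 ≤ ⨆ k, x i k ^ 2 := fun i =>
    le_trans (sq_nonneg (x i ⟨0, hp⟩)) (hmx i ⟨0, hp⟩)
  set N : ℝ := ∑ i, ⨆ j, x i j ^ 2 with hNdef
  have hN0 : 0 ≤ N := Finset.sum_nonneg fun i _ => hm0 i
  set M : ℝ := 1 / (n:ℝ) * N with hMdef
  have hδ2 : (0:ℝ) < δ ^ 2 := by positivity
  have hqβ : ∀ β : Fin p → ℝ, (∑ j, |β j|) ≤ 1 → ∑ i, (∑ j, β j * x i j) ^ 2 ≤ N := by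
    intro β hβ
    rw [hNdef]
    refine Finset.sum_le_sum fun i _ => ?_
    have hsq : ∀ j, |x i j| ≤ Real.sqrt (⨆ k, x i k ^ 2) := by
      intro j
      rw [← Real.sqrt_sq_eq_abs]
      exact Real.sqrt_le_sqrt (hmx i j)
    have h1 : |∑ j, β j * x i j| ≤ Real.sqrt (⨆ k, x i k ^ 2) := by
      calc |∑ j, β j * x i j| ≤ ∑ j, |β j * x i j| := Finset.abs_sum_le_sum_abs _ _
        _ = ∑ j, |β j| * |x i j| := by simp [abs_mul]
        _ ≤ ∑ j, |β j| * Real.sqrt (⨆ k, x i k ^ 2) :=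
            Finset.sum_le_sum fun j _ => mul_le_mul_of_nonneg_left (hsq j) (abs_nonneg _)
        _ = (∑ j, |β j|) * Real.sqrt (⨆ k, x i k ^ 2) := by rw [← Finset.sum_mul]
        _ ≤ 1 * Real.sqrt (⨆ k, x i k ^ 2) :=
            mul_le_mul_of_nonneg_right hβ (Real.sqrt_nonneg _)
        _ = Real.sqrt (⨆ k, x i k ^ 2) := one_mul _
    calc (∑ j, β j * x i j) ^ 2 = |∑ j, β j * x i j| ^ 2 := (sq_abs _).symm
      _ ≤ Real.sqrt (⨆ k, x i k ^ 2) ^ 2 := pow_le_pow_left₀ (abs_nonneg _) h1 2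
      _ = ⨆ k, x i k ^ 2 := Real.sq_sqrt (hm0 i)
  by_cases hMδ : M ≤ δ ^ 2
  · refine ⟨{0}, ?_, ?_⟩
    · have h1 : (0:ℝ) < (2 * (p : ℝ) + 1) ^ (M / δ ^ 2) :=
        Real.rpow_pos_of_pos (by positivity) _
      have := Nat.ceil_pos.mpr h1
      simpa using this
    · intro β hβ
      refine ⟨0, Finset.mem_singleton_self 0, ?_⟩
      have h2 : ∑ i, (∑ j, (β j - (0 : Fin p → ℝ) j) * x i j) ^ 2 ≤ N := by
        simpa using hqβ β hβ
      calc (1 / (n:ℝ)) * ∑ i, (∑ j, (β j - (0 : Fin p → ℝ) j) * x i j) ^ 2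
          ≤ 1 / (n:ℝ) * N := mul_le_mul_of_nonneg_left h2 (by positivity)
        _ = M := hMdef.symm
        _ ≤ δ ^ 2 := hMδ
  · push_neg at hMδ
    have hM1 : 1 < M / δ ^ 2 := by rw [lt_div_iff₀ hδ2]; linarith
    set e : ℝ := M / δ ^ 2 with hedef
    set S : ℕ := ⌈e⌉₊ - 1 with hSdef
    have hceil : 1 < ⌈e⌉₊ := Nat.lt_ceil.mpr (by exact_mod_cast hM1)
    have hS1 : 1 ≤ S := by omega
    have hSe : (S:ℝ) < e := Nat.lt_ceil.mp (by omega)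
    have heS : e ≤ (S:ℝ) + 1 := by
      have h1 := Nat.le_ceil e
      have h2 : ⌈e⌉₊ = S + 1 := by omega
      rw [h2] at h1
      push_cast at h1
      linarith
    have hSR : (0:ℝ) < (S:ℝ) := by exact_mod_cast hS1
    have hSne : (S:ℝ) ≠ 0 := ne_of_gt hSR
    refine ⟨Finset.image (fun g : Fin S → Option (Fin p × Bool) =>
      (S:ℝ)⁻¹ • ∑ t, vecAux p (g t)) Finset.univ, ?_, ?_⟩
    · -- cardinality
      have hc1 : (Finset.image (fun g : Fin S → Option (Fin p × Bool) =>
          (S:ℝ)⁻¹ • ∑ t, vecAux p (g t)) Finset.univ).card ≤ (p * 2 + 1) ^ S := by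
        refine le_trans Finset.card_image_le ?_
        rw [Finset.card_univ]
        simp [Fintype.card_fun]
      refine le_trans hc1 ?_
      have h2 : ((p * 2 + 1 : ℕ) ^ S : ℝ) ≤ (2 * (p:ℝ) + 1) ^ e := by
        have h3 : ((p * 2 + 1 : ℕ) ^ S : ℝ) = (2 * (p:ℝ) + 1) ^ (S:ℝ) := by
          rw [Real.rpow_natCast]
          push_cast
          ring
        rw [h3]
        exact Real.rpow_le_rpow_of_exponent_le (by push_cast; linarith) hSe.le
      have h4 : ((p * 2 + 1 : ℕ) ^ S : ℝ) ≤ (⌈(2 * (p:ℝ) + 1) ^ e⌉₊ : ℝ) :=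
        le_trans h2 (Nat.le_ceil _)
      exact_mod_cast h4
    · intro β hβ
      by_cases ha : M - (S:ℝ) * δ ^ 2 ≤ 1 / (n:ℝ) * ∑ i, (∑ j, β j * x i j) ^ 2
      · -- Maurey case
        set μ : Option (Fin p × Bool) → ℝ := fun o =>
          o.elim (1 - ∑ j, |β j|) fun q => (|β q.1| + (if q.2 then β q.1 else -(β q.1))) / 2
          with hμdef
        have h0 : ∀ v, 0 ≤ μ v := by
          intro v
          rcases v with _ | ⟨j, s⟩
          · simp only [hμdef, Option.elim]
            linarith
          · simp only [hμdef, Option.elim]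
            cases s
            · rw [if_neg Bool.false_ne_true]
              have := le_abs_self (β j)
              linarith
            · rw [if_pos rfl]
              have := neg_abs_le (β j)
              linarith
        have h1 : ∑ v, μ v = 1 := by
          rw [Fintype.sum_option]
          have h2 : ∑ q : Fin p × Bool, μ (some q) = ∑ j, |β j| := by
            rw [Fintype.sum_prod_type]
            refine Finset.sum_congr rfl fun j _ => ?_
            rw [Fintype.sum_bool]
            simp only [hμdef, Option.elim]
            simp
            ring
          rw [h2]
          simp only [hμdef, Option.elim]
          ring
        have hcoef : ∀ k, ∑ v, μ v * vecAux p v k = β k := by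
          intro k
          rw [Fintype.sum_option]
          have h2 : ∑ q : Fin p × Bool, μ (some q) * vecAux p (some q) k = β k := by
            rw [Fintype.sum_prod_type]
            have h3 : ∀ j : Fin p, ∑ s : Bool, μ (some (j, s)) * vecAux p (some (j, s)) k
                = if k = j then β j else 0 := by
              intro j
              rw [Fintype.sum_bool]
              simp only [hμdef, Option.elim, vecAux_some]
              by_cases hkj : k = j
              · simp only [hkj, if_true]
                simp
                ring
              · simp only [hkj, if_false]
                simp
            rw [Finset.sum_congr rfl fun j _ => h3 j]
            simp
          rw [h2]
          simp
        set y : EuclideanSpace ℝ (Fin n) := XA x β with hydef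
        set w : Option (Fin p × Bool) → EuclideanSpace ℝ (Fin n) :=
          fun v => XA x (vecAux p v) with hwdef
        have hy : ∑ v, μ v • w v = y := by
          ext i
          have hL : (∑ v, μ v • w v) i = ∑ v, μ v * ∑ j, vecAux p v j * x i j := by
            rw [WithLp.ofLp_sum, Finset.sum_apply]
            refine Finset.sum_congr rfl fun v _ => ?_
            simp [hwdef]
          rw [hL]
          have hR : y i = ∑ j, β j * x i j := by simp [hydef]
          rw [hR]
          calc ∑ v, μ v * ∑ j, vecAux p v j * x i j
              = ∑ v, ∑ j, μ v * vecAux p v j * x i j := by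
                refine Finset.sum_congr rfl fun v _ => ?_
                rw [Finset.mul_sum]
                refine Finset.sum_congr rfl fun j _ => by ring
            _ = ∑ j, ∑ v, μ v * vecAux p v j * x i j := Finset.sum_comm
            _ = ∑ j, β j * x i j := by
                refine Finset.sum_congr rfl fun j _ => ?_
                rw [← Finset.sum_mul, hcoef j]
        have hwN : ∀ v, ‖w v‖ ^ 2 ≤ N := by
          intro v
          rcases v with _ | ⟨j, s⟩
          · have : w none = 0 := by
              ext i
              simp [hwdef]
            rw [this, norm_zero]
            simpa using hN0
          · rw [normsq_eq]
            have h5 : ∀ i : Fin n, (w (some (j, s))) i ^ 2 = x i j ^ 2 := by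
              intro i
              have : (w (some (j, s))) i = (if s then (1:ℝ) else -1) * x i j := by
                simp only [hwdef, XA_apply, vecAux_some]
                simp [ite_mul]
              rw [this]
              cases s <;> simp [neg_mul] <;> ring
            rw [Finset.sum_congr rfl fun i _ => h5 i, hNdef]
            exact Finset.sum_le_sum fun i _ => hmx i j
        have hC : ∑ v, μ v * ‖w v - y‖ ^ 2 ≤ N - ‖y‖ ^ 2 := by
          have hexp2 : ∑ v, μ v * ‖w v - y‖ ^ 2
              = (∑ v, μ v * ‖w v‖ ^ 2) - ‖y‖ ^ 2 := by
            have h' : ∀ v, μ v * ‖w v - y‖ ^ 2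
                = μ v * ‖w v‖ ^ 2 - 2 * ⟪μ v • w v, y⟫ + μ v * ‖y‖ ^ 2 := by
              intro v
              rw [norm_sub_sq_real, real_inner_smul_left]
              ring
            rw [Finset.sum_congr rfl fun v _ => h' v, Finset.sum_add_distrib,
              Finset.sum_sub_distrib, ← Finset.mul_sum, ← sum_inner, hy,
              real_inner_self_eq_norm_sq, ← Finset.sum_mul, h1, one_mul]
            ring
          rw [hexp2]
          have h6 : ∑ v, μ v * ‖w v‖ ^ 2 ≤ N := by
            calc ∑ v, μ v * ‖w v‖ ^ 2 ≤ ∑ v, μ v * N :=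
                Finset.sum_le_sum fun v _ => mul_le_mul_of_nonneg_left (hwN v) (h0 v)
              _ = N := by rw [← Finset.sum_mul, h1, one_mul]
          linarith
        obtain ⟨g, hg⟩ := maurey w μ y (N - ‖y‖ ^ 2) h0 h1 hy hC S
        refine ⟨(S:ℝ)⁻¹ • ∑ t, vecAux p (g t),
          Finset.mem_image_of_mem _ (Finset.mem_univ g), ?_⟩
        set β' : Fin p → ℝ := (S:ℝ)⁻¹ • ∑ t, vecAux p (g t) with hβ'def
        have hXβ' : XA x β' = (S:ℝ)⁻¹ • ∑ t, w (g t) := by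
          ext i
          have hL : XA x β' i = ∑ j, ((S:ℝ)⁻¹ * ∑ t, vecAux p (g t) j) * x i j := by
            simp [hβ'def, XA_apply]
          rw [hL]
          have hR : ((S:ℝ)⁻¹ • ∑ t, w (g t)) i = (S:ℝ)⁻¹ * ∑ t, ∑ j, vecAux p (g t) j * x i j := by
            rw [PiLp.smul_apply, WithLp.ofLp_sum, Finset.sum_apply]
            simp [hwdef]
          rw [hR]
          calc ∑ j, ((S:ℝ)⁻¹ * ∑ t, vecAux p (g t) j) * x i j
              = ∑ j, ∑ t, (S:ℝ)⁻¹ * (vecAux p (g t) j * x i j) := by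
                refine Finset.sum_congr rfl fun j _ => ?_
                rw [Finset.mul_sum, Finset.sum_mul]
                refine Finset.sum_congr rfl fun t _ => by ring
            _ = ∑ t, ∑ j, (S:ℝ)⁻¹ * (vecAux p (g t) j * x i j) := Finset.sum_comm
            _ = (S:ℝ)⁻¹ * ∑ t, ∑ j, vecAux p (g t) j * x i j := by
                rw [Finset.mul_sum]
                refine Finset.sum_congr rfl fun t _ => (Finset.mul_sum _ _ _).symm
        have hsub : ∑ i, (∑ j, (β j - β' j) * x i j) ^ 2 = ‖XA x β - XA x β'‖ ^ 2 := by
          rw [normsq_eq]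
          refine Finset.sum_congr rfl fun i _ => ?_
          have : (XA x β - XA x β') i = ∑ j, (β j - β' j) * x i j := by
            rw [PiLp.sub_apply]
            simp only [XA_apply]
            rw [← Finset.sum_sub_distrib]
            refine Finset.sum_congr rfl fun j _ => by ring
          rw [this]
        rw [hsub, hXβ']
        have hfactor : XA x β - (S:ℝ)⁻¹ • ∑ t, w (g t)
            = (S:ℝ)⁻¹ • ((S:ℝ) • y - ∑ t, w (g t)) := by
          rw [smul_sub, smul_smul, inv_mul_cancel₀ hSne, one_smul, hydef]
        have hnorm1 : ‖XA x β - (S:ℝ)⁻¹ • ∑ t, w (g t)‖ ^ 2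
            = ((S:ℝ)⁻¹) ^ 2 * ‖(∑ t, w (g t)) - (S:ℝ) • y‖ ^ 2 := by
          rw [hfactor, norm_smul, norm_sub_rev, mul_pow, Real.norm_eq_abs, sq_abs]
        have hyn : ‖y‖ ^ 2 = ∑ i, (∑ j, β j * x i j) ^ 2 := by
          rw [normsq_eq]
          exact Finset.sum_congr rfl fun i _ => by rw [hydef]; simp
        have h8 : 1 / (n:ℝ) * (N - ‖y‖ ^ 2) ≤ (S:ℝ) * δ ^ 2 := by
          have heq : 1 / (n:ℝ) * (N - ‖y‖ ^ 2) = M - 1 / (n:ℝ) * ‖y‖ ^ 2 := by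
            rw [hMdef]; ring
          rw [heq, hyn]
          linarith
        have h9 : 1 / (n:ℝ) * (((S:ℝ)⁻¹) ^ 2 * ((N - ‖y‖ ^ 2) * (S:ℝ)))
            = (1 / (n:ℝ) * (N - ‖y‖ ^ 2)) * (S:ℝ)⁻¹ := by
          field_simp
        calc 1 / (n:ℝ) * ‖XA x β - (S:ℝ)⁻¹ • ∑ t, w (g t)‖ ^ 2
            = 1 / (n:ℝ) * (((S:ℝ)⁻¹) ^ 2 * ‖(∑ t, w (g t)) - (S:ℝ) • y‖ ^ 2) := by
              rw [hnorm1]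
          _ ≤ 1 / (n:ℝ) * (((S:ℝ)⁻¹) ^ 2 * ((N - ‖y‖ ^ 2) * (S:ℝ))) := by
              refine mul_le_mul_of_nonneg_left (mul_le_mul_of_nonneg_left hg ?_) ?_
              · positivity
              · positivity
          _ = (1 / (n:ℝ) * (N - ‖y‖ ^ 2)) * (S:ℝ)⁻¹ := h9
          _ ≤ ((S:ℝ) * δ ^ 2) * (S:ℝ)⁻¹ := mul_le_mul_of_nonneg_right h8 (by positivity)
          _ = δ ^ 2 := by field_simp
      · -- use 0
        refine ⟨0, ?_, ?_⟩
        · refine Finset.mem_image.mpr ⟨fun _ => none, Finset.mem_univ _, ?_⟩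
          funext k
          simp
        · push_neg at ha
          have hMe : M ≤ ((S:ℝ) + 1) * δ ^ 2 := by
            rw [hedef, div_le_iff₀ hδ2] at heS
            linarith
          have h7 : ∑ i, (∑ j, (β j - (0 : Fin p → ℝ) j) * x i j) ^ 2
              = ∑ i, (∑ j, β j * x i j) ^ 2 := by
            refine Finset.sum_congr rfl fun i _ => ?_
            congr 1
            exact Finset.sum_congr rfl fun j _ => by simp
          rw [h7]
          linarith
end

section
/- (Uniform bound on the gradient of the log-density). For every x ∈ [0,1]^p, every ψ ∈ Ψ̃, every y ∈ ℝ^q, and every k ∈ [K], each of the following partial derivatives of the map ψ ↦ ln s_ψ(y|x) has absolute value at most G(y) = max(A_Σ, 1+K·A_G)·(1 + q√q·(‖y‖_∞ + A_β)²·A_Σ): the derivative with respect to γ_{k0}; with respect to the scalar γ_kᵀx; with respect to each component of β_{k0}; with respect to each component of β_k x; and with respect to each entry of Σ_k. Explicitly: |∂ ln s_ψ(y|x)/∂γ_{k0}| = |∂ ln s_ψ(y|x)/∂(γ_kᵀx)| ≤ 1 + K·A_G; ‖∂ ln s_ψ(y|x)/∂β_{k0}‖_∞ = ‖∂ ln s_ψ(y|x)/∂(β_k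 x)‖_∞ ≤ √q·A_Σ·(‖y‖_∞ + A_β); and each |∂ ln s_ψ(y|x)/∂[Σ_k]_{z₁,z₂}| ≤ (1/2)·(A_Σ + q√q·(‖y‖_∞ + A_β)²·A_Σ²). -/
open MeasureTheory Real Finset ProbabilityTheory

noncomputable section

/-- Mixture of Gaussian experts density written in terms of the gating logits `w`,
the expert means `mu` and the expert covariances `S`. -/
def sgameAux (K q : ℕ) (w : Fin K → ℝ) (mu : Fin K → Fin q → ℝ)
    (S : Fin K → Matrix (Fin q) (Fin q) ℝ) (y : Fin q → ℝ) : ℝ :=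
  ∑ k, (Real.exp (w k) / ∑ l, Real.exp (w l)) * gaussPdf q (mu k) (S k) y

end


section SGAux
open Matrix Finset


variable {q : ℕ}

lemma sg_dot_symm {M : Matrix (Fin q) (Fin q) ℝ} (h : Mᵀ = M) (u v : Fin q → ℝ) :
    u ⬝ᵥ M *ᵥ v = v ⬝ᵥ M *ᵥ u := by
  rw [Matrix.dotProduct_mulVec]
  conv_lhs => rw [← h]
  rw [Matrix.vecMul_transpose, dotProduct_comm]

lemma sg_cs {M : Matrix (Fin q) (Fin q) ℝ} (hM : M.PosSemidef) (h : Mᵀ = M) (u v : Fin q → ℝ) :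
    (u ⬝ᵥ M *ᵥ v) ^ 2 ≤ (u ⬝ᵥ M *ᵥ u) * (v ⬝ᵥ M *ᵥ v) := by
  have key : ∀ t : ℝ, 0 ≤ (v ⬝ᵥ M *ᵥ v) * (t * t) + (2 * (u ⬝ᵥ M *ᵥ v)) * t + (u ⬝ᵥ M *ᵥ u) := by
    intro t
    have h0 := hM.dotProduct_mulVec_nonneg (u + t • v)
    have hsymm := sg_dot_symm h u v
    simp only [star_trivial, Matrix.mulVec_add, Matrix.mulVec_smul, dotProduct_add,
      add_dotProduct, smul_dotProduct, dotProduct_smul, smul_eq_mul] at h0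
    rw [← hsymm] at h0
    ring_nf at h0 ⊢
    linarith [h0]
  have hd := discrim_le_zero key
  rw [discrim] at hd
  nlinarith [hd]

lemma sg_quad_le {M : Matrix (Fin q) (Fin q) ℝ} (hM : M.IsHermitian) {A : ℝ}
    (h : ∀ μ ∈ spectrum ℝ M, μ ≤ A) (w : Fin q → ℝ) :
    w ⬝ᵥ M *ᵥ w ≤ A * (w ⬝ᵥ w) := by
  have hN : ((algebraMap ℝ (Matrix (Fin q) (Fin q) ℝ)) A - M).IsHermitian := by
    have : ((algebraMap ℝ (Matrix (Fin q) (Fin q) ℝ)) A - M)ᴴ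
        = (algebraMap ℝ (Matrix (Fin q) (Fin q) ℝ)) A - M := by
      rw [Matrix.conjTranspose_sub, hM.eq, Algebra.algebraMap_eq_smul_one,
        Matrix.conjTranspose_smul]
      simp
    exact this
  have heig : ∀ i, 0 ≤ hN.eigenvalues i := by
    intro i
    have hmem := hN.eigenvalues_mem_spectrum_real i
    rw [← spectrum.singleton_sub_eq] at hmem
    obtain ⟨x, hx, y, hy, hxy⟩ := Set.mem_sub.mp hmem
    rw [Set.mem_singleton_iff] at hx
    subst hx
    have hyA := h y hy
    linarith [hxy]
  have hpsd := hN.posSemidef_iff_eigenvalues_nonneg.mpr heig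
  have h0 := hpsd.dotProduct_mulVec_nonneg w
  simp only [star_trivial, Algebra.algebraMap_eq_smul_one, Matrix.sub_mulVec,
    Matrix.smul_mulVec, Matrix.one_mulVec, dotProduct_sub, dotProduct_smul,
    smul_eq_mul] at h0
  linarith

lemma sg_mulVec_sq_le {M : Matrix (Fin q) (Fin q) ℝ} (hM : M.PosSemidef) (h : Mᵀ = M) {A : ℝ}
    (hA : 0 ≤ A) (hq : ∀ w, w ⬝ᵥ M *ᵥ w ≤ A * (w ⬝ᵥ w)) (v : Fin q → ℝ) :
    (M *ᵥ v) ⬝ᵥ (M *ᵥ v) ≤ A ^ 2 * (v ⬝ᵥ v) := by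
  set u := M *ᵥ v with hu
  have hX : u ⬝ᵥ u = v ⬝ᵥ M *ᵥ u := by
    rw [sg_dot_symm h v u, hu]
  have hXnn : 0 ≤ u ⬝ᵥ u := by
    simp only [dotProduct]
    exact Finset.sum_nonneg fun i _ => mul_self_nonneg _
  have hcs := sg_cs hM h v u
  have h1 : v ⬝ᵥ M *ᵥ v ≤ A * (v ⬝ᵥ v) := hq v
  have h2 : u ⬝ᵥ M *ᵥ u ≤ A * (u ⬝ᵥ u) := hq u
  have hvMv : 0 ≤ v ⬝ᵥ M *ᵥ v := by simpa using hM.dotProduct_mulVec_nonneg v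
  have huMu : 0 ≤ u ⬝ᵥ M *ᵥ u := by simpa using hM.dotProduct_mulVec_nonneg u
  have hvv : 0 ≤ v ⬝ᵥ v := by
    simp only [dotProduct]; exact Finset.sum_nonneg fun i _ => mul_self_nonneg _
  -- (u⬝u)^2 ≤ A^2 (v⬝v) (u⬝u)
  have hkey : (u ⬝ᵥ u) ^ 2 ≤ A ^ 2 * (v ⬝ᵥ v) * (u ⬝ᵥ u) := by
    calc (u ⬝ᵥ u) ^ 2 = (v ⬝ᵥ M *ᵥ u) ^ 2 := by rw [hX]
    _ ≤ (v ⬝ᵥ M *ᵥ v) * (u ⬝ᵥ M *ᵥ u) := hcs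
    _ ≤ (A * (v ⬝ᵥ v)) * (A * (u ⬝ᵥ u)) := by
        apply mul_le_mul h1 h2 huMu (by positivity)
    _ = A ^ 2 * (v ⬝ᵥ v) * (u ⬝ᵥ u) := by ring
  rcases eq_or_lt_of_le hXnn with h0 | h0
  · rw [← h0]; positivity
  · nlinarith [hkey]

lemma sg_entry_le {M : Matrix (Fin q) (Fin q) ℝ} (hM : M.PosSemidef) (h : Mᵀ = M) {A : ℝ}
    (hA : 0 ≤ A) (hq : ∀ w, w ⬝ᵥ M *ᵥ w ≤ A * (w ⬝ᵥ w)) (a b : Fin q) :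
    |M a b| ≤ A := by
  have hdiag : ∀ c : Fin q, M c c ≤ A := by
    intro c
    have := hq (Pi.single c 1)
    simpa [single_dotProduct, dotProduct_single] using this
  have hdnn : ∀ c : Fin q, 0 ≤ M c c := by
    intro c
    have := hM.dotProduct_mulVec_nonneg (Pi.single c 1)
    simpa [single_dotProduct, dotProduct_single] using this
  have hcs := sg_cs hM h (Pi.single a 1) (Pi.single b 1)
  simp only [single_dotProduct, Matrix.mulVec_single_one, Matrix.col_apply, one_mul, mul_one] at hcs
  have : (M a b) ^ 2 ≤ A ^ 2 := by nlinarith [hdiag a, hdiag b, hdnn a, hdnn b, hcs]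
  calc |M a b| = Real.sqrt ((M a b) ^ 2) := (Real.sqrt_sq_eq_abs _).symm
  _ ≤ Real.sqrt (A ^ 2) := Real.sqrt_le_sqrt this
  _ = A := Real.sqrt_sq hA

lemma sg_comp_le {M : Matrix (Fin q) (Fin q) ℝ} (hM : M.PosSemidef) (h : Mᵀ = M) {A B : ℝ}
    (hA : 0 ≤ A) (hB : 0 ≤ B) (hq : ∀ w, w ⬝ᵥ M *ᵥ w ≤ A * (w ⬝ᵥ w)) (v : Fin q → ℝ)
    (hv : ∀ a, |v a| ≤ B) (z : Fin q) :
    |(M *ᵥ v) z| ≤ A * Real.sqrt q * B := by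
  have hvv : v ⬝ᵥ v ≤ q * B ^ 2 := by
    simp only [dotProduct]
    calc ∑ i, v i * v i ≤ ∑ _i : Fin q, B ^ 2 := by
          apply Finset.sum_le_sum
          intro i _
          nlinarith [hv i, abs_nonneg (v i), sq_abs (v i)]
    _ = q * B ^ 2 := by simp [mul_comm]
  have h1 : ((M *ᵥ v) z) ^ 2 ≤ (M *ᵥ v) ⬝ᵥ (M *ᵥ v) := by
    simp only [dotProduct]
    have := Finset.single_le_sum (f := fun i => (M *ᵥ v) i * (M *ᵥ v) i)
      (fun i _ => mul_self_nonneg _) (Finset.mem_univ z)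
    simpa [pow_two] using this
  have h2 := sg_mulVec_sq_le hM h hA hq v
  have h3 : ((M *ᵥ v) z) ^ 2 ≤ (A * Real.sqrt q * B) ^ 2 := by
    have hq2 : (Real.sqrt q) ^ 2 = (q : ℝ) := Real.sq_sqrt (Nat.cast_nonneg q)
    calc ((M *ᵥ v) z) ^ 2 ≤ A ^ 2 * (v ⬝ᵥ v) := le_trans h1 h2
    _ ≤ A ^ 2 * (q * B ^ 2) := mul_le_mul_of_nonneg_left hvv (sq_nonneg A)
    _ = (A * Real.sqrt q * B) ^ 2 := by rw [mul_pow, mul_pow, hq2]; ring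
  calc |(M *ᵥ v) z| = Real.sqrt (((M *ᵥ v) z) ^ 2) := (Real.sqrt_sq_eq_abs _).symm
  _ ≤ Real.sqrt ((A * Real.sqrt q * B) ^ 2) := Real.sqrt_le_sqrt h3
  _ = A * Real.sqrt q * B := Real.sqrt_sq (by positivity)

attribute [local instance] Matrix.linftyOpNormedRing Matrix.linftyOpNormedAlgebra


lemma sg_gaussPdf_pos {S : Matrix (Fin q) (Fin q) ℝ} (hS : S.PosDef) (mu y : Fin q → ℝ) :
    0 < gaussPdf q mu S y := by
  have h2pi : (0:ℝ) < 2 * π := by positivity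
  exact mul_pos (mul_pos (Real.rpow_pos_of_pos h2pi _)
    (Real.rpow_pos_of_pos hS.det_pos _)) (Real.exp_pos _)

lemma sg_log_core {C g φ D t₀ : ℝ} (hC : 0 ≤ C) (hg : 0 < g) (hφ : 0 < φ)
    {f : ℝ → ℝ} (hf : HasDerivAt f (φ * D) t₀) (hft : f t₀ = φ) :
    HasDerivAt (fun t => Real.log (C + g * f t)) (g * φ * D / (C + g * φ)) t₀ ∧
      |g * φ * D / (C + g * φ)| ≤ |D| := by
  have hs : 0 < C + g * φ := by positivity
  constructor
  · have h1 : HasDerivAt (fun t => C + g * f t) (g * (φ * D)) t₀ :=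
      (hf.const_mul g).const_add C
    have h2 := h1.log (by rw [hft]; exact hs.ne')
    rw [hft] at h2
    convert h2 using 1
    ring
  · rw [abs_div, abs_of_pos hs, div_le_iff₀ hs]
    have h1 : |g * φ * D| = (g * φ) * |D| := by
      rw [abs_mul, abs_of_pos (mul_pos hg hφ)]
    rw [h1]
    have : g * φ ≤ C + g * φ := by linarith
    exact mul_le_mul_of_nonneg_right this (abs_nonneg _) |>.trans
      (by rw [mul_comm])|>.trans (le_refl _)

lemma sg_hasDerivAt_gauss_mean {S : Matrix (Fin q) (Fin q) ℝ} (hsym : Sᵀ = S)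
    (m y : Fin q → ℝ) (z : Fin q) :
    HasDerivAt (fun u => gaussPdf q (Function.update m z u) S y)
      (gaussPdf q m S y * ((S⁻¹ *ᵥ (y - m)) z)) (m z) := by
  set M := S⁻¹ with hM
  have hMsym : Mᵀ = M := by
    rw [hM, Matrix.transpose_nonsing_inv, hsym]
  set v : Fin q → ℝ := y - m with hv
  set e : Fin q → ℝ := Pi.single z 1 with he
  have key : ∀ u : ℝ, y - Function.update m z u = v + (m z - u) • e := by
    intro u
    funext a
    by_cases hz : a = z
    · subst hz
      simp [hv, he, Function.update_self, Pi.sub_apply]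
    · simp [hv, he, Function.update_of_ne hz, Pi.single_eq_of_ne hz]
  have heMv : e ⬝ᵥ M *ᵥ v = (M *ᵥ v) z := by
    simp [he, single_dotProduct]
  have hvMe : v ⬝ᵥ M *ᵥ e = (M *ᵥ v) z := by
    rw [sg_dot_symm hMsym, heMv]
  have hQ : ∀ u : ℝ, (y - Function.update m z u) ⬝ᵥ M *ᵥ (y - Function.update m z u)
      = (v ⬝ᵥ M *ᵥ v) + (m z - u) * (2 * ((M *ᵥ v) z)) + (m z - u) ^ 2 * (e ⬝ᵥ M *ᵥ e) := by
    intro u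
    rw [key u]
    simp only [Matrix.mulVec_add, Matrix.mulVec_smul, dotProduct_add, add_dotProduct,
      smul_dotProduct, dotProduct_smul, smul_eq_mul, heMv, hvMe]
    ring
  -- polynomial derivative
  have hpoly : HasDerivAt (fun u : ℝ =>
      (v ⬝ᵥ M *ᵥ v) + (m z - u) * (2 * ((M *ᵥ v) z)) + (m z - u) ^ 2 * (e ⬝ᵥ M *ᵥ e))
      (-(2 * ((M *ᵥ v) z))) (m z) := by
    have h1 : HasDerivAt (fun u : ℝ => m z - u) (-1) (m z) := by
      simpa using (hasDerivAt_id (m z)).const_sub (m z)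
    have h2 := (h1.mul_const (2 * ((M *ᵥ v) z))).const_add (v ⬝ᵥ M *ᵥ v)
    have h3 := (h1.pow 2).mul_const (e ⬝ᵥ M *ᵥ e)
    have h4 := h2.add h3
    exact h4.congr_deriv (by simp)
  have hgauss : (fun u => gaussPdf q (Function.update m z u) S y)
      = fun u => ((2 * π) ^ (-(q : ℝ) / 2) * S.det ^ (-(1 : ℝ) / 2)) *
          Real.exp (-((v ⬝ᵥ M *ᵥ v) + (m z - u) * (2 * ((M *ᵥ v) z))
            + (m z - u) ^ 2 * (e ⬝ᵥ M *ᵥ e)) / 2) := by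
    funext u
    rw [gaussPdf, ← hQ u]
  rw [hgauss]
  have hexp := ((hpoly.neg.div_const 2).exp).const_mul
    ((2 * π) ^ (-(q : ℝ) / 2) * S.det ^ (-(1 : ℝ) / 2))
  refine hexp.congr_deriv ?_
  rw [gaussPdf]
  simp only [Pi.neg_apply, sub_self, zero_mul, ne_eq, OfNat.ofNat_ne_zero, not_false_eq_true, zero_pow,
    add_zero, mul_zero]
  rw [← hv]
  ring

lemma sg_hasDerivAt_gauss_cov {S : Matrix (Fin q) (Fin q) ℝ} (hS : S.PosDef) (hsym : Sᵀ = S)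
    (m y : Fin q → ℝ) (z1 z2 : Fin q) :
    HasDerivAt (fun t => gaussPdf q m
        (Matrix.of fun a b => if a = z1 ∧ b = z2 then t else S a b) y)
      (gaussPdf q m S y *
        ((-(S⁻¹ z2 z1) + (S⁻¹ *ᵥ (y - m)) z1 * (S⁻¹ *ᵥ (y - m)) z2) / 2)) (S z1 z2) := by
  classical
  set t₀ := S z1 z2 with ht₀
  set E : Matrix (Fin q) (Fin q) ℝ := Matrix.single z1 z2 1 with hE
  set v : Fin q → ℝ := y - m with hv
  set M := S⁻¹ with hM
  have hMsym : Mᵀ = M := by rw [hM, Matrix.transpose_nonsing_inv, hsym]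
  have hdet0 : S.det ≠ 0 := hS.det_pos.ne'
  have hUnit : IsUnit S := (Matrix.isUnit_iff_isUnit_det S).mpr hdet0.isUnit
  -- the path
  have keyM : ∀ t : ℝ, (Matrix.of fun a b => if a = z1 ∧ b = z2 then t else S a b)
      = S + (t - t₀) • E := by
    intro t
    ext a b
    simp only [Matrix.of_apply, Matrix.add_apply, Matrix.smul_apply, hE,
      Matrix.single, Matrix.of_apply, smul_eq_mul]
    by_cases h : a = z1 ∧ b = z2
    · obtain ⟨rfl, rfl⟩ := h
      simp [ht₀]
    · have h' : ¬(z1 = a ∧ z2 = b) := fun hc => h ⟨hc.1.symm, hc.2.symm⟩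
      simp [h, h']
  -- determinant is affine
  have hdet : ∀ t : ℝ, (S + (t - t₀) • E).det = S.det + (t - t₀) * S.adjugate z2 z1 := by
    intro t
    have hrow : S + (t - t₀) • E
        = S.updateRow z1 (S z1 + (t - t₀) • (Pi.single z2 1 : Fin q → ℝ)) := by
      ext a b
      by_cases h : a = z1
      · subst h
        simp only [Matrix.add_apply, Matrix.smul_apply, Matrix.updateRow_self, Pi.add_apply,
          Pi.smul_apply, hE, Matrix.single, Matrix.of_apply, smul_eq_mul,
          Pi.single_apply, true_and]
        by_cases hb : b = z2
        · subst hb; simp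
        · have hb' : z2 ≠ b := fun hc => hb hc.symm
          simp [hb, hb']
      · simp only [Matrix.add_apply, Matrix.smul_apply, hE, Matrix.single,
          Matrix.of_apply, smul_eq_mul, Matrix.updateRow_ne h]
        have h' : ¬(z1 = a ∧ z2 = b) := fun hc => h hc.1.symm
        simp [h']
    rw [hrow, Matrix.det_updateRow_add, Matrix.det_updateRow_smul, Matrix.updateRow_eq_self,
      ← Matrix.adjugate_apply]
  have hadj : S.adjugate z2 z1 = S.det * M z2 z1 := by
    have : M = S.det⁻¹ • S.adjugate := by
      rw [hM, Matrix.inv_def, Ring.inverse_eq_inv']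
    rw [this]
    simp [Matrix.smul_apply, smul_eq_mul]
    field_simp
  -- derivative of determinant
  have hd : HasDerivAt (fun t : ℝ => (S + (t - t₀) • E).det) (S.adjugate z2 z1) t₀ := by
    have : (fun t : ℝ => (S + (t - t₀) • E).det)
        = fun t => S.det + (t - t₀) * S.adjugate z2 z1 := funext hdet
    rw [this]
    simpa using (((hasDerivAt_id t₀).sub_const t₀).mul_const (S.adjugate z2 z1)).const_add S.det
  -- derivative of inverse along the path
  have hpath : HasDerivAt (fun t : ℝ => S + (t - t₀) • E) E t₀ := by
    exact ((((hasDerivAt_id t₀).sub_const t₀).smul_const E).const_add S).congr_deriv (one_smul ℝ E)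
  have hu := hasFDerivAt_ringInverse (𝕜 := ℝ) hUnit.unit
  have hSu : (↑hUnit.unit : Matrix (Fin q) (Fin q) ℝ) = S + (t₀ - t₀) • E := by
    simp [hUnit.unit_spec]
  rw [hSu] at hu
  have hinv : HasDerivAt (fun t : ℝ => Ring.inverse (S + (t - t₀) • E)) (-(M * E * M)) t₀ := by
    have hcomp := hu.comp_hasDerivAt t₀ hpath
    simp [hM, Matrix.nonsing_inv_eq_ringInverse, hUnit.unit_spec,
      ContinuousLinearMap.mulLeftRight_apply, Function.comp_def] at hcomp ⊢
    exact hcomp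
  -- quadratic form as CLM
  let Llin : Matrix (Fin q) (Fin q) ℝ →ₗ[ℝ] ℝ :=
    { toFun := fun A => v ⬝ᵥ A *ᵥ v
      map_add' := by intro A B; simp [Matrix.add_mulVec, dotProduct_add]
      map_smul' := by intro c A; simp [Matrix.smul_mulVec, dotProduct_smul] }
  let L := LinearMap.toContinuousLinearMap Llin
  have hQ : HasDerivAt (fun t : ℝ => v ⬝ᵥ (Ring.inverse (S + (t - t₀) • E) : Matrix _ _ ℝ) *ᵥ v)
      (-((M *ᵥ v) z1 * (M *ᵥ v) z2)) t₀ := by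
    have hcomp := L.hasFDerivAt.comp_hasDerivAt t₀ hinv
    have hval : L (-(M * E * M)) = -((M *ᵥ v) z1 * (M *ᵥ v) z2) := by
      show v ⬝ᵥ (-(M * E * M)) *ᵥ v = _
      have h1 : (M * E * M) *ᵥ v = M *ᵥ (E *ᵥ (M *ᵥ v)) := by
        rw [← Matrix.mulVec_mulVec, ← Matrix.mulVec_mulVec]
      have h2 : E *ᵥ (M *ᵥ v) = ((M *ᵥ v) z2) • (Pi.single z1 1 : Fin q → ℝ) := by
        rw [hE, Matrix.single_mulVec]
        funext a
        by_cases h : a = z1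
        · subst h; simp
        · simp [Function.update_of_ne h, Pi.single_eq_of_ne h]
      have h3 : v ⬝ᵥ M *ᵥ Pi.single z1 1 = (M *ᵥ v) z1 := by
        rw [sg_dot_symm hMsym]
        simp [single_dotProduct]
      rw [Matrix.neg_mulVec, dotProduct_neg, h1, h2, Matrix.mulVec_smul, dotProduct_smul,
        smul_eq_mul, h3]
      ring
    exact hcomp.congr_deriv hval
  -- assemble gaussPdf derivative
  have hrpow : HasDerivAt (fun t : ℝ => ((S + (t - t₀) • E).det) ^ (-(1 : ℝ) / 2))
      (S.adjugate z2 z1 * (-(1 : ℝ) / 2) * S.det ^ (-(1 : ℝ) / 2 - 1)) t₀ := by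
    have hne : (S + (t₀ - t₀) • E).det ≠ 0 := by simpa using hdet0
    have := hd.rpow_const (p := -(1 : ℝ) / 2) (Or.inl hne)
    simpa using this
  have hexp : HasDerivAt
      (fun t : ℝ => Real.exp (-(v ⬝ᵥ (Ring.inverse (S + (t - t₀) • E) : Matrix _ _ ℝ) *ᵥ v) / 2))
      (Real.exp (-(v ⬝ᵥ M *ᵥ v) / 2) * (((M *ᵥ v) z1 * (M *ᵥ v) z2) / 2)) t₀ := by
    have := (hQ.neg.div_const 2).exp
    have hval : v ⬝ᵥ (Ring.inverse (S + (t₀ - t₀) • E) : Matrix _ _ ℝ) *ᵥ v = v ⬝ᵥ M *ᵥ v := by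
      simp [hM, Matrix.nonsing_inv_eq_ringInverse]
    simp only [Pi.neg_apply] at this
    rw [hval] at this
    refine this.congr_deriv ?_
    ring
  simp only [← Matrix.nonsing_inv_eq_ringInverse] at hexp
  have hfn : (fun t : ℝ => gaussPdf q m
      (Matrix.of fun a b => if a = z1 ∧ b = z2 then t else S a b) y)
      = fun t : ℝ => (2 * π) ^ (-(q : ℝ) / 2) *
          (((S + (t - t₀) • E).det) ^ (-(1 : ℝ) / 2) *
          Real.exp (-(v ⬝ᵥ (S + (t - t₀) • E)⁻¹ *ᵥ v) / 2)) := by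
    funext t
    simp only [gaussPdf]
    rw [keyM t, ← hv]
    ring
  rw [hfn]
  have hprod := ((hrpow.mul hexp).const_mul ((2 * π) ^ (-(q : ℝ) / 2)))
  simp only [sub_self, zero_smul, add_zero, ← hM] at hprod
  refine hprod.congr_deriv ?_
  -- value computation
  rw [show gaussPdf q m S y = (2 * π) ^ (-(q : ℝ) / 2) * S.det ^ (-(1 : ℝ) / 2) *
      Real.exp (-(v ⬝ᵥ M *ᵥ v) / 2) from rfl, hadj]
  have hpow : S.det ^ (-(1 : ℝ) / 2 - 1) = S.det ^ (-(1 : ℝ) / 2) / S.det := by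
    rw [Real.rpow_sub hS.det_pos, Real.rpow_one]
  rw [hpow]
  field_simp


lemma sg_ratio {K : ℕ} (w φv : Fin K → ℝ) :
    ∑ l, Real.exp (w l) / (∑ m, Real.exp (w m)) * φv l
      = (∑ l, Real.exp (w l) * φv l) / (∑ m, Real.exp (w m)) := by
  rw [Finset.sum_div]
  exact Finset.sum_congr rfl fun l _ => div_mul_eq_mul_div _ _ _

end SGAux

open Matrix in
set_option maxHeartbeats 4000000 in
/-- uniform bound on the gradient of the log-density. -/
theorem sgame_gradient_log_density_bound
    (K p q : ℕ) (hK : 1 ≤ K) (hp : 1 ≤ p) (hq : 1 ≤ q)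
    (Agam Abeta aSig ASig : ℝ)
    (hAgam : 0 < Agam) (hAbeta : 0 < Abeta) (haSig : 0 < aSig) (hASig : 0 < ASig)
    (ψ : SGaMEParam K p q) (hψ : InPsiT Agam Abeta aSig ASig ψ)
    (x : Fin p → ℝ) (hx : x ∈ cube p) (y : Fin q → ℝ) (k : Fin K) :
    -- derivative with respect to γ_{k0} equals the derivative with respect to γ_kᵀx,
    -- and is bounded by 1 + K·A_G (hence by G(y))
    (deriv (fun t : ℝ =>
        Real.log (SGaMEParam.density { ψ with g0 := Function.update ψ.g0 k t } x y))
        (ψ.g0 k) =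
      deriv (fun t : ℝ =>
        Real.log (sgameAux K q (Function.update (fun l => ψ.logit l x) k (ψ.g0 k + t))
          (fun l => ψ.mean l x) ψ.cov y)) (∑ j, ψ.g k j * x j)) ∧
    (|deriv (fun t : ℝ =>
        Real.log (SGaMEParam.density { ψ with g0 := Function.update ψ.g0 k t } x y))
        (ψ.g0 k)| ≤ 1 + K * AGbd K Agam) ∧
    (|deriv (fun t : ℝ =>
        Real.log (SGaMEParam.density { ψ with g0 := Function.update ψ.g0 k t } x y))
        (ψ.g0 k)| ≤
      max ASig (1 + K * AGbd K Agam) * (1 + q * Real.sqrt q * (‖y‖ + Abeta) ^ 2 * ASig)) ∧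
    -- derivatives with respect to the components of β_{k0} and of β_k x
    (∀ z : Fin q,
      deriv (fun t : ℝ =>
        Real.log (SGaMEParam.density
          { ψ with b0 := Function.update ψ.b0 k (Function.update (ψ.b0 k) z t) } x y))
        (ψ.b0 k z) =
      deriv (fun t : ℝ =>
        Real.log (sgameAux K q (fun l => ψ.logit l x)
          (Function.update (fun l => ψ.mean l x) k
            (Function.update (ψ.mean k x) z (ψ.b0 k z + t))) ψ.cov y))
        (((ψ.b k).mulVec x) z)) ∧
    (∀ z : Fin q,
      |deriv (fun t : ℝ =>
        Real.log (SGaMEParam.density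
          { ψ with b0 := Function.update ψ.b0 k (Function.update (ψ.b0 k) z t) } x y))
        (ψ.b0 k z)| ≤ Real.sqrt q * ASig * (‖y‖ + Abeta)) ∧
    (∀ z : Fin q,
      |deriv (fun t : ℝ =>
        Real.log (SGaMEParam.density
          { ψ with b0 := Function.update ψ.b0 k (Function.update (ψ.b0 k) z t) } x y))
        (ψ.b0 k z)| ≤
      max ASig (1 + K * AGbd K Agam) * (1 + q * Real.sqrt q * (‖y‖ + Abeta) ^ 2 * ASig)) ∧
    -- derivatives with respect to the entries of Σ_k
    (∀ z1 z2 : Fin q,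
      |deriv (fun t : ℝ =>
        Real.log (SGaMEParam.density
          { ψ with cov := (Function.update ψ.cov k
              (Matrix.of fun a b => if a = z1 ∧ b = z2 then t else ψ.cov k a b)) } x y))
        (ψ.cov k z1 z2)| ≤
      (1 / 2 : ℝ) * (ASig + q * Real.sqrt q * (‖y‖ + Abeta) ^ 2 * ASig ^ 2)) ∧
    (∀ z1 z2 : Fin q,
      |deriv (fun t : ℝ =>
        Real.log (SGaMEParam.density
          { ψ with cov := (Function.update ψ.cov k
              (Matrix.of fun a b => if a = z1 ∧ b = z2 then t else ψ.cov k a b)) } x y))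
        (ψ.cov k z1 z2)| ≤
      max ASig (1 + K * AGbd K Agam) * (1 + q * Real.sqrt q * (‖y‖ + Abeta) ^ 2 * ASig)) := by
  classical
  obtain ⟨hcov, hgam, hbeta, hspec⟩ := hψ
  have hne : Nonempty (Fin K) := ⟨⟨0, hK⟩⟩
  set S := ψ.cov k with hSdef
  have hSpd : S.PosDef := (hcov k).2
  have hSsym : Sᵀ = S := (hcov k).1
  set M := S⁻¹ with hMdef
  have hMpd : M.PosDef := hSpd.inv
  have hMpsd : M.PosSemidef := hMpd.posSemidef
  have hMsym : Mᵀ = M := by rw [hMdef, Matrix.transpose_nonsing_inv, hSsym]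
  have hquad : ∀ w, w ⬝ᵥ M *ᵥ w ≤ ASig * (w ⬝ᵥ w) :=
    sg_quad_le hMpsd.1 (fun μ hμ => (hspec k μ hμ).2)
  set v : Fin q → ℝ := y - ψ.mean k x with hvdef
  set B : ℝ := ‖y‖ + Abeta with hBdef
  have hB0 : 0 < B := lt_of_lt_of_le hAbeta (le_add_of_nonneg_left (norm_nonneg y))
  have hvB : ∀ a, |v a| ≤ B := by
    intro a
    have h1 : |y a| ≤ ‖y‖ := by
      simpa [Real.norm_eq_abs] using norm_le_pi_norm y a
    have h2 : |ψ.mean k x a| ≤ Abeta := by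
      have := hbeta k x hx a
      calc |ψ.mean k x a| = |ψ.b0 k a + ((ψ.b k).mulVec x) a| := rfl
      _ ≤ |ψ.b0 k a| + |((ψ.b k).mulVec x) a| := abs_add_le _ _
      _ ≤ Abeta := this
    calc |v a| = |y a - ψ.mean k x a| := rfl
    _ ≤ |y a| + |ψ.mean k x a| := abs_sub _ _
    _ ≤ B := by rw [hBdef]; exact add_le_add h1 h2
  have hsq : (1:ℝ) ≤ Real.sqrt q := by
    rw [show (1:ℝ) = Real.sqrt 1 by simp]
    exact Real.sqrt_le_sqrt (by exact_mod_cast hq)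
  have hq1 : (1:ℝ) ≤ (q:ℝ) := by exact_mod_cast hq
  -- gating quantities
  have hT : 0 < ∑ l, Real.exp (ψ.logit l x) :=
    Finset.sum_pos (fun l _ => Real.exp_pos _) Finset.univ_nonempty
  have hgate_pos : ∀ l, 0 < ψ.gate l x := fun l => div_pos (Real.exp_pos _) hT
  set gk := ψ.gate k x with hgkdef
  have hgk : 0 < gk := hgate_pos k
  set φk := gaussPdf q (ψ.mean k x) S y with hφkdef
  have hφk : 0 < φk := sg_gaussPdf_pos hSpd _ _
  set Cβ : ℝ := ∑ l ∈ Finset.univ.erase k, ψ.gate l x * gaussPdf q (ψ.mean l x) (ψ.cov l) y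
    with hCβdef
  have hCβ : 0 ≤ Cβ := Finset.sum_nonneg fun l _ =>
    le_of_lt (mul_pos (hgate_pos l) (sg_gaussPdf_pos (hcov l).2 _ _))
  -- main numeric bounds
  have hAG : 0 < AGbd K Agam := by
    have hKR : (0:ℝ) < K := by exact_mod_cast hK
    exact div_pos (Real.exp_pos _) (mul_pos hKR (Real.exp_pos _))
  have hKAG : 0 ≤ (K:ℝ) * AGbd K Agam := by positivity
  set Gm : ℝ := max ASig (1 + K * AGbd K Agam) with hGmdef
  set T : ℝ := 1 + q * Real.sqrt q * (‖y‖ + Abeta) ^ 2 * ASig with hTdef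
  have hTB : T = 1 + q * Real.sqrt q * B ^ 2 * ASig := by rw [hTdef, hBdef]
  have hT1 : (1:ℝ) ≤ T := by
    rw [hTB]
    have hnn : 0 ≤ (q:ℝ) * Real.sqrt q * B ^ 2 * ASig := by positivity
    linarith
  have hGm1 : (1:ℝ) ≤ Gm := le_trans (by linarith) (le_max_right _ _)
  have hGmA : ASig ≤ Gm := le_max_left _ _
  -- ==================== gating (γ) part ====================
  set c : ℝ := ∑ j, ψ.g k j * x j with hcdef
  set Aγ : ℝ := ∑ l ∈ Finset.univ.erase k,
      Real.exp (ψ.logit l x) * gaussPdf q (ψ.mean l x) (ψ.cov l) y with hAγdef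
  set Bγ : ℝ := ∑ l ∈ Finset.univ.erase k, Real.exp (ψ.logit l x) with hBγdef
  have hAγ0 : 0 ≤ Aγ := Finset.sum_nonneg fun l _ =>
    le_of_lt (mul_pos (Real.exp_pos _) (sg_gaussPdf_pos (hcov l).2 _ _))
  have hBγ0 : 0 ≤ Bγ := Finset.sum_nonneg fun l _ => (Real.exp_pos _).le
  have hNpos : ∀ u : ℝ, 0 < Aγ + Real.exp u * φk := fun u =>
    add_pos_of_nonneg_of_pos hAγ0 (mul_pos (Real.exp_pos _) hφk)
  have hDpos : ∀ u : ℝ, 0 < Bγ + Real.exp u := fun u =>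
    add_pos_of_nonneg_of_pos hBγ0 (Real.exp_pos _)
  set dG : ℝ → ℝ := fun u => Real.exp u * φk / (Aγ + Real.exp u * φk)
      - Real.exp u / (Bγ + Real.exp u) with hdGdef
  have hG : ∀ u₀ : ℝ, HasDerivAt
      (fun u => Real.log ((Aγ + Real.exp u * φk) / (Bγ + Real.exp u))) (dG u₀) u₀ := by
    intro u₀
    have hfun : (fun u => Real.log ((Aγ + Real.exp u * φk) / (Bγ + Real.exp u)))
        = fun u => Real.log (Aγ + Real.exp u * φk) - Real.log (Bγ + Real.exp u) :=
      funext fun u => Real.log_div (hNpos u).ne' (hDpos u).ne'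
    rw [hfun]
    have h1 := (((Real.hasDerivAt_exp u₀).mul_const φk).const_add Aγ).log (hNpos u₀).ne'
    have h2 := ((Real.hasDerivAt_exp u₀).const_add Bγ).log (hDpos u₀).ne'
    exact h1.sub h2
  have hdGbd : ∀ u : ℝ, |dG u| ≤ 1 := by
    intro u
    have ht1a : 0 ≤ Real.exp u * φk / (Aγ + Real.exp u * φk) :=
      div_nonneg (mul_nonneg (Real.exp_pos u).le hφk.le) (hNpos u).le
    have ht1b : Real.exp u * φk / (Aγ + Real.exp u * φk) ≤ 1 := by
      rw [div_le_one (hNpos u)]; linarith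
    have ht2a : 0 ≤ Real.exp u / (Bγ + Real.exp u) :=
      div_nonneg (Real.exp_pos u).le (hDpos u).le
    have ht2b : Real.exp u / (Bγ + Real.exp u) ≤ 1 := by
      rw [div_le_one (hDpos u)]; linarith
    rw [hdGdef, abs_le]
    constructor <;> simp only <;> linarith
  -- function rewrites
  have funext_γ1 : ∀ t : ℝ,
      SGaMEParam.density { ψ with g0 := Function.update ψ.g0 k t } x y
        = (Aγ + Real.exp (t + c) * φk) / (Bγ + Real.exp (t + c)) := by
    intro t
    have hden : SGaMEParam.density { ψ with g0 := Function.update ψ.g0 k t } x y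
        = ∑ l, Real.exp (Function.update ψ.g0 k t l + ∑ j, ψ.g l j * x j)
            / (∑ m, Real.exp (Function.update ψ.g0 k t m + ∑ j, ψ.g m j * x j))
            * gaussPdf q (ψ.mean l x) (ψ.cov l) y := rfl
    rw [hden, sg_ratio]
    congr 1
    · rw [← Finset.sum_erase_add _ _ (Finset.mem_univ k), hAγdef]
      congr 1
      · exact Finset.sum_congr rfl fun l hl => by
          rw [Function.update_of_ne (Finset.ne_of_mem_erase hl)]; rfl
      · rw [Function.update_self, hφkdef, hSdef, hcdef]
    · rw [← Finset.sum_erase_add _ _ (Finset.mem_univ k), hBγdef]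
      congr 1
      · exact Finset.sum_congr rfl fun l hl => by
          rw [Function.update_of_ne (Finset.ne_of_mem_erase hl)]; rfl
      · rw [Function.update_self, hcdef]
  have funext_γ2 : ∀ t : ℝ,
      sgameAux K q (Function.update (fun l => ψ.logit l x) k (ψ.g0 k + t))
          (fun l => ψ.mean l x) ψ.cov y
        = (Aγ + Real.exp (ψ.g0 k + t) * φk) / (Bγ + Real.exp (ψ.g0 k + t)) := by
    intro t
    rw [sgameAux, sg_ratio]
    congr 1
    · rw [← Finset.sum_erase_add _ _ (Finset.mem_univ k), hAγdef]
      congr 1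
      · exact Finset.sum_congr rfl fun l hl => by
          rw [Function.update_of_ne (Finset.ne_of_mem_erase hl)]
      · rw [Function.update_self, hφkdef, hSdef]
    · rw [← Finset.sum_erase_add _ _ (Finset.mem_univ k), hBγdef]
      congr 1
      · exact Finset.sum_congr rfl fun l hl => by
          rw [Function.update_of_ne (Finset.ne_of_mem_erase hl)]
      · rw [Function.update_self]
  have hd1 : HasDerivAt (fun t : ℝ =>
      Real.log (SGaMEParam.density { ψ with g0 := Function.update ψ.g0 k t } x y))
      (dG (ψ.g0 k + c)) (ψ.g0 k) := by
    have he : (fun t : ℝ =>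
        Real.log (SGaMEParam.density { ψ with g0 := Function.update ψ.g0 k t } x y))
        = fun t => Real.log ((Aγ + Real.exp (t + c) * φk) / (Bγ + Real.exp (t + c))) :=
      funext fun t => by rw [funext_γ1 t]
    rw [he]
    have hinner : HasDerivAt (fun t : ℝ => t + c) 1 (ψ.g0 k) := (hasDerivAt_id _).add_const c
    have := (hG (ψ.g0 k + c)).comp (ψ.g0 k) hinner
    simpa [Function.comp_def] using this
  have hd2 : HasDerivAt (fun t : ℝ =>
      Real.log (sgameAux K q (Function.update (fun l => ψ.logit l x) k (ψ.g0 k + t))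
        (fun l => ψ.mean l x) ψ.cov y)) (dG (ψ.g0 k + c)) c := by
    have he : (fun t : ℝ =>
        Real.log (sgameAux K q (Function.update (fun l => ψ.logit l x) k (ψ.g0 k + t))
          (fun l => ψ.mean l x) ψ.cov y))
        = fun t => Real.log ((Aγ + Real.exp (ψ.g0 k + t) * φk) / (Bγ + Real.exp (ψ.g0 k + t))) :=
      funext fun t => by rw [funext_γ2 t]
    rw [he]
    have hinner : HasDerivAt (fun t : ℝ => ψ.g0 k + t) 1 c := (hasDerivAt_id _).const_add _
    have := (hG (ψ.g0 k + c)).comp c hinner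
    simpa [Function.comp_def] using this
  -- ==================== expert mean (β) part ====================
  set bx := (ψ.b k).mulVec x with hbxdef
  have hmeanz : ∀ z : Fin q, ψ.mean k x z = ψ.b0 k z + bx z := fun z => rfl
  have hβcore : ∀ z : Fin q,
      HasDerivAt (fun u => Real.log (Cβ + gk *
          gaussPdf q (Function.update (ψ.mean k x) z u) S y))
        (gk * φk * ((M *ᵥ v) z) / (Cβ + gk * φk)) (ψ.mean k x z) ∧
      |gk * φk * ((M *ᵥ v) z) / (Cβ + gk * φk)| ≤ |(M *ᵥ v) z| := by
    intro z
    have hf := sg_hasDerivAt_gauss_mean (q := q) hSsym (ψ.mean k x) y z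
    rw [← hvdef, ← hMdef, ← hφkdef] at hf
    exact sg_log_core hCβ hgk hφk hf (by rw [Function.update_eq_self, hφkdef])
  have funext_β1 : ∀ (z : Fin q) (t : ℝ),
      SGaMEParam.density
          { ψ with b0 := Function.update ψ.b0 k (Function.update (ψ.b0 k) z t) } x y
        = Cβ + gk * gaussPdf q (Function.update (ψ.mean k x) z (t + bx z)) S y := by
    intro z t
    have hden : SGaMEParam.density
        { ψ with b0 := Function.update ψ.b0 k (Function.update (ψ.b0 k) z t) } x y
        = ∑ l, ψ.gate l x * gaussPdf q
            (fun w => Function.update ψ.b0 k (Function.update (ψ.b0 k) z t) l w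
              + ((ψ.b l).mulVec x) w) (ψ.cov l) y := rfl
    rw [hden, ← Finset.sum_erase_add _ _ (Finset.mem_univ k), hCβdef]
    congr 1
    · refine Finset.sum_congr rfl fun l hl => ?_
      rw [Function.update_of_ne (Finset.ne_of_mem_erase hl)]
      rfl
    · rw [Function.update_self]
      have hmm : (fun w => Function.update (ψ.b0 k) z t w + ((ψ.b k).mulVec x) w)
          = Function.update (ψ.mean k x) z (t + bx z) := by
        funext w
        by_cases hw : w = z
        · subst hw; rw [Function.update_self, Function.update_self]
        · rw [Function.update_of_ne hw, Function.update_of_ne hw]; rfl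
      rw [hmm]
  have funext_β2 : ∀ (z : Fin q) (t : ℝ),
      sgameAux K q (fun l => ψ.logit l x)
          (Function.update (fun l => ψ.mean l x) k
            (Function.update (ψ.mean k x) z (ψ.b0 k z + t))) ψ.cov y
        = Cβ + gk * gaussPdf q (Function.update (ψ.mean k x) z (ψ.b0 k z + t)) S y := by
    intro z t
    rw [sgameAux, ← Finset.sum_erase_add _ _ (Finset.mem_univ k), hCβdef]
    congr 1
    · refine Finset.sum_congr rfl fun l hl => ?_
      rw [Function.update_of_ne (Finset.ne_of_mem_erase hl)]
      rfl
    · rw [Function.update_self]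
      rfl
  have hd3 : ∀ z : Fin q, HasDerivAt (fun t : ℝ =>
      Real.log (SGaMEParam.density
        { ψ with b0 := Function.update ψ.b0 k (Function.update (ψ.b0 k) z t) } x y))
      (gk * φk * ((M *ᵥ v) z) / (Cβ + gk * φk)) (ψ.b0 k z) := by
    intro z
    have he : (fun t : ℝ => Real.log (SGaMEParam.density
        { ψ with b0 := Function.update ψ.b0 k (Function.update (ψ.b0 k) z t) } x y))
        = fun t => Real.log (Cβ + gk *
            gaussPdf q (Function.update (ψ.mean k x) z (t + bx z)) S y) :=
      funext fun t => by rw [funext_β1 z t]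
    rw [he]
    have hinner : HasDerivAt (fun t : ℝ => t + bx z) 1 (ψ.b0 k z) :=
      (hasDerivAt_id _).add_const _
    have hpt : ψ.b0 k z + bx z = ψ.mean k x z := (hmeanz z).symm
    have := ((hβcore z).1).comp (ψ.b0 k z) (by rw [← hpt] at *; exact hinner)
    simp only [Function.comp_def] at this
    simpa [hpt] using this
  have hd4 : ∀ z : Fin q, HasDerivAt (fun t : ℝ =>
      Real.log (sgameAux K q (fun l => ψ.logit l x)
        (Function.update (fun l => ψ.mean l x) k
          (Function.update (ψ.mean k x) z (ψ.b0 k z + t))) ψ.cov y))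
      (gk * φk * ((M *ᵥ v) z) / (Cβ + gk * φk)) (bx z) := by
    intro z
    have he : (fun t : ℝ => Real.log (sgameAux K q (fun l => ψ.logit l x)
        (Function.update (fun l => ψ.mean l x) k
          (Function.update (ψ.mean k x) z (ψ.b0 k z + t))) ψ.cov y))
        = fun t => Real.log (Cβ + gk *
            gaussPdf q (Function.update (ψ.mean k x) z (ψ.b0 k z + t)) S y) :=
      funext fun t => by rw [funext_β2 z t]
    rw [he]
    have hinner : HasDerivAt (fun t : ℝ => ψ.b0 k z + t) 1 (bx z) :=
      (hasDerivAt_id _).const_add _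
    have hpt : ψ.b0 k z + bx z = ψ.mean k x z := (hmeanz z).symm
    have := ((hβcore z).1).comp (bx z) (by rw [← hpt] at *; exact hinner)
    simp only [Function.comp_def] at this
    simpa [hpt] using this
  have hβbd : ∀ z : Fin q, |(M *ᵥ v) z| ≤ ASig * Real.sqrt q * B :=
    fun z => sg_comp_le hMpsd hMsym hASig.le hB0.le hquad v hvB z
  -- ==================== covariance (Σ) part ====================
  have hSigcore : ∀ z1 z2 : Fin q,
      HasDerivAt (fun t : ℝ => Real.log (SGaMEParam.density
          { ψ with cov := (Function.update ψ.cov k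
              (Matrix.of fun a b => if a = z1 ∧ b = z2 then t else ψ.cov k a b)) } x y))
        (gk * φk * ((-(M z2 z1) + (M *ᵥ v) z1 * (M *ᵥ v) z2) / 2) / (Cβ + gk * φk))
        (ψ.cov k z1 z2) ∧
      |gk * φk * ((-(M z2 z1) + (M *ᵥ v) z1 * (M *ᵥ v) z2) / 2) / (Cβ + gk * φk)|
        ≤ |(-(M z2 z1) + (M *ᵥ v) z1 * (M *ᵥ v) z2) / 2| := by
    intro z1 z2
    have hf := sg_hasDerivAt_gauss_cov (q := q) hSpd hSsym (ψ.mean k x) y z1 z2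
    rw [← hvdef, ← hMdef, ← hφkdef] at hf
    have hft : gaussPdf q (ψ.mean k x)
        (Matrix.of fun a b => if a = z1 ∧ b = z2 then S z1 z2 else S a b) y = φk := by
      rw [hφkdef]
      congr 1
      ext a b
      simp only [Matrix.of_apply]
      split_ifs with h
      · rw [h.1, h.2]
      · rfl
    have funext_Sig : ∀ t : ℝ,
        SGaMEParam.density { ψ with cov := (Function.update ψ.cov k
            (Matrix.of fun a b => if a = z1 ∧ b = z2 then t else ψ.cov k a b)) } x y
          = Cβ + gk * gaussPdf q (ψ.mean k x)
              (Matrix.of fun a b => if a = z1 ∧ b = z2 then t else S a b) y := by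
      intro t
      have hden : SGaMEParam.density { ψ with cov := (Function.update ψ.cov k
          (Matrix.of fun a b => if a = z1 ∧ b = z2 then t else ψ.cov k a b)) } x y
          = ∑ l, ψ.gate l x * gaussPdf q (ψ.mean l x)
              (Function.update ψ.cov k
                (Matrix.of fun a b => if a = z1 ∧ b = z2 then t else ψ.cov k a b) l) y := rfl
      rw [hden, ← Finset.sum_erase_add _ _ (Finset.mem_univ k), hCβdef]
      congr 1
      · refine Finset.sum_congr rfl fun l hl => ?_
        rw [Function.update_of_ne (Finset.ne_of_mem_erase hl)]
      · rw [Function.update_self]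
    have hcore := sg_log_core hCβ hgk hφk hf hft
    constructor
    · have he : (fun t : ℝ => Real.log (SGaMEParam.density
          { ψ with cov := (Function.update ψ.cov k
              (Matrix.of fun a b => if a = z1 ∧ b = z2 then t else ψ.cov k a b)) } x y))
          = fun t => Real.log (Cβ + gk * gaussPdf q (ψ.mean k x)
              (Matrix.of fun a b => if a = z1 ∧ b = z2 then t else S a b) y) :=
        funext fun t => by rw [funext_Sig t]
      rw [he]
      exact hcore.1
    · exact hcore.2
  have hSigbd : ∀ z1 z2 : Fin q, |(-(M z2 z1) + (M *ᵥ v) z1 * (M *ᵥ v) z2) / 2|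
      ≤ (1 / 2 : ℝ) * (ASig + q * Real.sqrt q * B ^ 2 * ASig ^ 2) := by
    intro z1 z2
    have h1 : |M z2 z1| ≤ ASig := sg_entry_le hMpsd hMsym hASig.le hquad z2 z1
    have h2 := hβbd z1
    have h3 := hβbd z2
    have hprod : |(M *ᵥ v) z1 * (M *ᵥ v) z2| ≤ (ASig * Real.sqrt q * B) ^ 2 := by
      rw [abs_mul]
      calc |(M *ᵥ v) z1| * |(M *ᵥ v) z2| ≤ (ASig * Real.sqrt q * B) * (ASig * Real.sqrt q * B) :=
        mul_le_mul h2 h3 (abs_nonneg _) (by positivity)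
      _ = (ASig * Real.sqrt q * B) ^ 2 := by ring
    have hsq2 : (Real.sqrt q) ^ 2 = (q : ℝ) := Real.sq_sqrt (Nat.cast_nonneg q)
    have hprod2 : (ASig * Real.sqrt q * B) ^ 2 ≤ q * Real.sqrt q * B ^ 2 * ASig ^ 2 := by
      have : (ASig * Real.sqrt q * B) ^ 2 = (q : ℝ) * B ^ 2 * ASig ^ 2 := by
        rw [mul_pow, mul_pow, hsq2]; ring
      rw [this]
      nlinarith [hsq, hq1, sq_nonneg B, sq_nonneg ASig, mul_pos (mul_pos hB0 hB0) (mul_pos hASig hASig)]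
    calc |(-(M z2 z1) + (M *ᵥ v) z1 * (M *ᵥ v) z2) / 2|
        ≤ (|M z2 z1| + |(M *ᵥ v) z1 * (M *ᵥ v) z2|) / 2 := by
          rw [abs_div, abs_two]
          gcongr
          calc |(-(M z2 z1) + (M *ᵥ v) z1 * (M *ᵥ v) z2)|
              ≤ |(-(M z2 z1))| + |(M *ᵥ v) z1 * (M *ᵥ v) z2| := abs_add_le _ _
          _ = |M z2 z1| + |(M *ᵥ v) z1 * (M *ᵥ v) z2| := by rw [abs_neg]
    _ ≤ (1 / 2 : ℝ) * (ASig + q * Real.sqrt q * B ^ 2 * ASig ^ 2) := by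
          have hpp := le_trans hprod hprod2
          nlinarith [h1, hpp, abs_nonneg (M z2 z1), abs_nonneg ((M *ᵥ v) z1 * (M *ᵥ v) z2)]
  -- ==================== final assembly ====================
  have hbd1 : |dG (ψ.g0 k + c)| ≤ 1 := hdGbd _
  have hgoal2 : |dG (ψ.g0 k + c)| ≤ 1 + K * AGbd K Agam := by linarith
  have hGmT : Gm ≤ Gm * T := le_mul_of_one_le_right (by linarith) hT1
  refine ⟨?_, ?_, ?_, ?_, ?_, ?_, ?_, ?_⟩
  · rw [hd1.deriv, hd2.deriv]
  · rw [hd1.deriv]; exact hgoal2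
  · rw [hd1.deriv]
    calc |dG (ψ.g0 k + c)| ≤ 1 + K * AGbd K Agam := hgoal2
    _ ≤ Gm := le_max_right _ _
    _ ≤ Gm * T := hGmT
  · intro z
    rw [(hd3 z).deriv, (hd4 z).deriv]
  · intro z
    rw [(hd3 z).deriv]
    calc |gk * φk * ((M *ᵥ v) z) / (Cβ + gk * φk)| ≤ |(M *ᵥ v) z| := (hβcore z).2
    _ ≤ ASig * Real.sqrt q * B := hβbd z
    _ = Real.sqrt q * ASig * (‖y‖ + Abeta) := by rw [hBdef]; ring
  · intro z
    rw [(hd3 z).deriv]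
    have hb := le_trans (hβcore z).2 (hβbd z)
    rcases le_or_gt (Real.sqrt q * B) 1 with hcase | hcase
    · calc |gk * φk * ((M *ᵥ v) z) / (Cβ + gk * φk)| ≤ ASig * Real.sqrt q * B := hb
      _ = ASig * (Real.sqrt q * B) := by ring
      _ ≤ ASig * 1 := mul_le_mul_of_nonneg_left hcase hASig.le
      _ = ASig := mul_one _
      _ ≤ Gm := hGmA
      _ ≤ Gm * T := hGmT
    · have hsqB : Real.sqrt q * B ≤ (q : ℝ) * B ^ 2 := by
        have h0 : (0:ℝ) ≤ Real.sqrt q * B := by positivity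
        have hsq2 : (Real.sqrt q) ^ 2 = (q : ℝ) := Real.sq_sqrt (Nat.cast_nonneg q)
        nlinarith [hcase]
      have : ASig * Real.sqrt q * B ≤ q * Real.sqrt q * B ^ 2 * ASig := by
        have h1 : ASig * (Real.sqrt q * B) ≤ ASig * ((q : ℝ) * B ^ 2) :=
          mul_le_mul_of_nonneg_left hsqB hASig.le
        have h2 : ASig * ((q : ℝ) * B ^ 2) ≤ ASig * ((q : ℝ) * Real.sqrt q * B ^ 2) := by
          nlinarith [hsq, hq1, sq_nonneg B, hASig.le, mul_pos hB0 hB0]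
        nlinarith [h1, h2]
      calc |gk * φk * ((M *ᵥ v) z) / (Cβ + gk * φk)| ≤ ASig * Real.sqrt q * B := hb
      _ ≤ q * Real.sqrt q * B ^ 2 * ASig := this
      _ ≤ T := by rw [hTB]; linarith
      _ = 1 * T := (one_mul T).symm
      _ ≤ Gm * T := mul_le_mul_of_nonneg_right hGm1 (by linarith)
  · intro z1 z2
    rw [(hSigcore z1 z2).1.deriv]
    exact le_trans (hSigcore z1 z2).2 (hSigbd z1 z2)
  · intro z1 z2
    rw [(hSigcore z1 z2).1.deriv]
    have hb := le_trans (hSigcore z1 z2).2 (hSigbd z1 z2)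
    have hfin : (1 / 2 : ℝ) * (ASig + q * Real.sqrt q * B ^ 2 * ASig ^ 2) ≤ Gm * T := by
      have h1 : q * Real.sqrt q * B ^ 2 * ASig ^ 2 ≤ Gm * (T - 1) := by
        have : q * Real.sqrt q * B ^ 2 * ASig ^ 2
            = ASig * (q * Real.sqrt q * B ^ 2 * ASig) := by ring
        rw [this, hTB]
        have hT1' : q * Real.sqrt q * B ^ 2 * ASig = (1 + q * Real.sqrt q * B ^ 2 * ASig) - 1 := by
          ring
        have hnn : 0 ≤ q * Real.sqrt q * B ^ 2 * ASig := by positivity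
        nlinarith [hGmA, hnn, hASig.le, hGm1]
      nlinarith [hGmA, hGm1, hT1, h1]
    calc |gk * φk * ((-(M z2 z1) + (M *ᵥ v) z1 * (M *ᵥ v) z2) / 2) / (Cβ + gk * φk)|
        ≤ (1 / 2 : ℝ) * (ASig + q * Real.sqrt q * B ^ 2 * ASig ^ 2) := hb
    _ ≤ Gm * T := hfin
end
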